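/- arXiv:2211.09304 — 5 statements merged into one kernel-verified Lean document; each statement's English description precedes it below -/
import Mathlib

section
/- Let n ≥ 8δ − 10k + 4 with k ≥ 1 and δ ≥ 2k + 1. Then ρ(K_{2k} ∇ (K_{δ−2k+1} ∪ K_{n−δ−1})) < ρ(K_δ ∇ (K_{n−2δ+2k−1} ∪ (δ−2k+1)K₁)). -/
set_option maxHeartbeats 1000000

open SimpleGraph Matrix

/-- The adjacency spectral radius of a finite graph: the supremum of its
adjacency eigenvalues. -/
noncomputable def specRad {V : Type*} [Fintype V] (G : SimpleGraph V) : ℝ :=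
  letI := Classical.decEq V
  letI := Classical.decRel G.Adj
  sSup {t : ℝ | ∃ v : V → ℝ, v ≠ 0 ∧ G.adjMatrix ℝ *ᵥ v = t • v}
/-- The graph `K_d ∇ (K_{n-2d+t-1} ∪ (d-t+1) K₁)` on `Fin n`: the first `d`
vertices are a dominating clique, the next `n-2d+t-1` vertices form a clique,
and the last `d-t+1` vertices are independent. -/
def joinGraph (n d t : ℕ) : SimpleGraph (Fin n) :=
  SimpleGraph.fromRel (fun x y =>
    x.val < d ∨ (x.val < n - (d - t + 1) ∧ y.val < n - (d - t + 1)))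

/-- The graph `K_{2k} ∇ (K_{δ-2k+1} ∪ K_{n-δ-1})` on `Fin n`: the first `2k`
vertices are a dominating clique, the vertices in `[2k, δ+1)` form a clique of
size `δ-2k+1`, and the vertices in `[δ+1, n)` form a clique of size `n-δ-1`. -/
def joinTwoCliques (n k δ : ℕ) : SimpleGraph (Fin n) :=
  SimpleGraph.fromRel (fun x y =>
    x.val < 2 * k
    ∨ (2 * k ≤ x.val ∧ x.val < δ + 1 ∧ 2 * k ≤ y.val ∧ y.val < δ + 1)
    ∨ (δ + 1 ≤ x.val ∧ δ + 1 ≤ y.val))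

lemma sum_range_piecewise (a b n : ℕ) (hab : a ≤ b) (hbn : b ≤ n)
    (f : ℕ → ℝ) (A B C : ℝ)
    (hA : ∀ x, x < a → f x = A) (hB : ∀ x, a ≤ x → x < b → f x = B)
    (hC : ∀ x, b ≤ x → x < n → f x = C) :
    ∑ x ∈ Finset.range n, f x = (a : ℝ) * A + ((b : ℝ) - a) * B + ((n : ℝ) - b) * C := by
  rw [Finset.range_eq_Ico, ← Finset.sum_Ico_consecutive f (Nat.zero_le b) hbn,
      ← Finset.sum_Ico_consecutive f (Nat.zero_le a) hab]
  have h1 : ∑ x ∈ Finset.Ico 0 a, f x = (a : ℝ) * A := by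
    rw [Finset.sum_congr rfl (fun x hx => hA x (Finset.mem_Ico.1 hx).2)]
    simp [mul_comm]
  have h2 : ∑ x ∈ Finset.Ico a b, f x = ((b : ℝ) - a) * B := by
    rw [Finset.sum_congr rfl (fun x hx => hB x (Finset.mem_Ico.1 hx).1 (Finset.mem_Ico.1 hx).2)]
    rw [Finset.sum_const, Nat.card_Ico, nsmul_eq_mul, Nat.cast_sub hab]
  have h3 : ∑ x ∈ Finset.Ico b n, f x = ((n : ℝ) - b) * C := by
    rw [Finset.sum_congr rfl (fun x hx => hC x (Finset.mem_Ico.1 hx).1 (Finset.mem_Ico.1 hx).2)]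
    rw [Finset.sum_const, Nat.card_Ico, nsmul_eq_mul, Nat.cast_sub hbn]
  rw [h1, h2, h3]

lemma eig_le {V : Type*} [Fintype V] (G : SimpleGraph V) [DecidableRel G.Adj]
    (y : V → ℝ) (hy : ∀ i, 0 < y i) (r : ℝ)
    (hr : ∀ i, (G.adjMatrix ℝ *ᵥ y) i ≤ r * y i)
    {t : ℝ} {v : V → ℝ} (hv : v ≠ 0) (he : G.adjMatrix ℝ *ᵥ v = t • v) :
    t ≤ r := by
  obtain ⟨j0, hj0⟩ : ∃ j, v j ≠ 0 := by
    by_contra h; push_neg at h; exact hv (funext h)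
  obtain ⟨i, -, hi⟩ := Finset.exists_max_image Finset.univ (fun j => |v j| / y j)
    ⟨j0, Finset.mem_univ _⟩
  set c := |v i| / y i with hc
  have hvle : ∀ j, |v j| ≤ c * y j := fun j => by
    have h := hi j (Finset.mem_univ j)
    have := (div_le_iff₀ (hy j)).1 h
    linarith
  have hcpos : 0 < c := lt_of_lt_of_le (div_pos (abs_pos.2 hj0) (hy j0)) (hi j0 (Finset.mem_univ _))
  have hci : |v i| = c * y i := by
    rw [hc, div_mul_cancel₀ _ (hy i).ne']
  have hAnn : ∀ a b : V, 0 ≤ G.adjMatrix ℝ a b := fun a b => by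
    by_cases h : G.Adj a b <;> simp [adjMatrix_apply, h]
  have key : |t| * |v i| ≤ r * |v i| := by
    have h1 : |t| * |v i| = |(G.adjMatrix ℝ *ᵥ v) i| := by
      rw [he]; simp [abs_mul]
    rw [h1]
    have h2 : (G.adjMatrix ℝ *ᵥ v) i = ∑ j, G.adjMatrix ℝ i j * v j := by
      simp [Matrix.mulVec, dotProduct]
    rw [h2]
    calc |∑ j, G.adjMatrix ℝ i j * v j| ≤ ∑ j, |G.adjMatrix ℝ i j * v j| :=
          Finset.abs_sum_le_sum_abs _ _
      _ = ∑ j, G.adjMatrix ℝ i j * |v j| := by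
          refine Finset.sum_congr rfl fun j _ => ?_
          rw [abs_mul, abs_of_nonneg (hAnn i j)]
      _ ≤ ∑ j, G.adjMatrix ℝ i j * (c * y j) := by
          exact Finset.sum_le_sum fun j _ => mul_le_mul_of_nonneg_left (hvle j) (hAnn i j)
      _ = c * ∑ j, G.adjMatrix ℝ i j * y j := by
          rw [Finset.mul_sum]; exact Finset.sum_congr rfl fun j _ => by ring
      _ = c * (G.adjMatrix ℝ *ᵥ y) i := by
          simp [Matrix.mulVec, dotProduct]
      _ ≤ c * (r * y i) := mul_le_mul_of_nonneg_left (hr i) hcpos.le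
      _ = r * |v i| := by rw [hci]; ring
  have hvipos : 0 < |v i| := by rw [hci]; exact mul_pos hcpos (hy i)
  exact (le_abs_self t).trans (le_of_mul_le_mul_right (by linarith [key]) hvipos)

lemma mulVec_adj {V : Type*} [Fintype V] (G : SimpleGraph V) [DecidableRel G.Adj]
    (v : V → ℝ) (i : V) :
    (G.adjMatrix ℝ *ᵥ v) i = ∑ j, if G.Adj i j then v j else 0 := by
  simp [Matrix.mulVec, dotProduct, adjMatrix_apply, ite_mul]

lemma row_sum {n : ℕ} (G : SimpleGraph (Fin n)) [DecidableRel G.Adj]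
    (v : Fin n → ℝ) (F : ℕ → ℝ) (i : Fin n)
    (h0 : ∀ j : Fin n, j ≠ i → (if G.Adj i j then v j else 0) = F j.val) :
    ∑ j : Fin n, (if G.Adj i j then v j else 0)
      = (∑ x ∈ Finset.range n, F x) - F i.val := by
  have e1 : ∑ j : Fin n, (if G.Adj i j then v j else 0)
      = (∑ j ∈ Finset.univ.erase i, (if G.Adj i j then v j else 0))
        + (if G.Adj i i then v i else 0) :=
    (Finset.sum_erase_add _ _ (Finset.mem_univ i)).symm
  have e2 : ∑ x ∈ Finset.range n, F x = ∑ j : Fin n, F j.val :=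
    (Fin.sum_univ_eq_sum_range F n).symm
  have e3 : ∑ j : Fin n, F j.val = (∑ j ∈ Finset.univ.erase i, F j.val) + F i.val :=
    (Finset.sum_erase_add _ _ (Finset.mem_univ i)).symm
  rw [e1, e2, e3, Finset.sum_congr rfl (fun j hj => h0 j (Finset.ne_of_mem_erase hj))]
  simp

theorem stmt7 (n k δ : ℕ) (hk : 1 ≤ k) (hδ : 2 * k + 1 ≤ δ)
    (hn : 8 * δ - 10 * k + 4 ≤ n) :
    specRad (joinTwoCliques n k δ) < specRad (joinGraph n δ (2 * k)) := by
  letI instG1 : DecidableRel (joinTwoCliques n k δ).Adj := Classical.decRel _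
  letI instG2 : DecidableRel (joinGraph n δ (2 * k)).Adj := Classical.decRel _
  have hn3 : 3 * δ + 9 ≤ n := by omega
  set m2 : ℕ := n - (δ - 2 * k + 1) with hm2def
  have hm2a : δ ≤ m2 := by omega
  have hm2b : m2 ≤ n := by omega
  have hδ1n : δ + 1 ≤ n := by omega
  have h2kδ : 2 * k ≤ δ + 1 := by omega
  have hδn : δ ≤ n := by omega
  have hKR : (1:ℝ) ≤ (k:ℝ) := by exact_mod_cast hk
  have hDR : 2*(k:ℝ) + 1 ≤ (δ:ℝ) := by exact_mod_cast hδ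
  have hNR : 3*(δ:ℝ) + 9 ≤ (n:ℝ) := by exact_mod_cast hn3
  have hM2 : (m2:ℝ) = (n:ℝ) - (δ:ℝ) + 2*(k:ℝ) - 1 := by
    have h : m2 + δ + 1 = n + 2*k := by omega
    have h' : ((m2:ℝ) + (δ:ℝ) + 1) = (n:ℝ) + 2*(k:ℝ) := by exact_mod_cast congrArg (Nat.cast (R := ℝ)) h
    linarith
  -- existence of λ₂, the top eigenvalue of the quotient of joinGraph
  obtain ⟨l2, hl2mem, hl2⟩ : ∃ l ∈ Set.Ioo ((n:ℝ) - δ + 2*k - 2) ((n:ℝ) - 1),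
      ((δ:ℝ) - 1 - l) * (l - ((n:ℝ) - 2*δ + 2*k - 2)) * l
      + (δ:ℝ) * ((n:ℝ) - 2*δ + 2*k - 1) * l
      + (δ:ℝ) * ((δ:ℝ) - 2*k + 1) * (l - ((n:ℝ) - 2*δ + 2*k - 2)) = 0 := by
    set F2 : ℝ → ℝ := fun l => ((δ:ℝ) - 1 - l) * (l - ((n:ℝ) - 2*δ + 2*k - 2)) * l
      + (δ:ℝ) * ((n:ℝ) - 2*δ + 2*k - 1) * l
      + (δ:ℝ) * ((δ:ℝ) - 2*k + 1) * (l - ((n:ℝ) - 2*δ + 2*k - 2)) with hF2def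
    have hc : ContinuousOn F2 (Set.Icc ((n:ℝ) - δ + 2*k - 2) ((n:ℝ)-1)) := by
      apply Continuous.continuousOn; rw [hF2def]; fun_prop
    have hle : (n:ℝ) - δ + 2*k - 2 ≤ (n:ℝ) - 1 := by linarith
    have hpos : 0 < F2 ((n:ℝ) - δ + 2*k - 2) := by
      have he : F2 ((n:ℝ) - δ + 2*k - 2) = (δ:ℝ)^2 * ((δ:ℝ) - 2*k + 1) := by
        rw [hF2def]; ring
      rw [he]; nlinarith
    have hneg : F2 ((n:ℝ) - 1) < 0 := by
      have he : F2 ((n:ℝ)-1)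
          = ((δ:ℝ) - 2*k + 1) * ((δ:ℝ)*(2*δ - 2*k + 1) - (n:ℝ)*((n:ℝ)-1)) := by
        rw [hF2def]; ring
      rw [he]
      have h2 : (δ:ℝ)*(2*δ - 2*(k:ℝ) + 1) < (n:ℝ)*((n:ℝ)-1) := by nlinarith
      nlinarith
    obtain ⟨l, hl, he⟩ := intermediate_value_Ioo' hle hc ⟨hneg, hpos⟩
    exact ⟨l, hl, he⟩
  obtain ⟨hl2r, hl2n⟩ := hl2mem
  have hl2pos : (0:ℝ) < l2 := by linarith
  have hl2D : (δ:ℝ) < l2 := by linarith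
  have hl2s : 0 < l2 - ((n:ℝ) - 2*δ + 2*k - 2) := by linarith
  have hl2p : 0 < l2 - ((n:ℝ) - δ - 2) := by linarith
  have hl2dk : 0 < l2 - ((δ:ℝ) - 2*k) := by linarith
  -- F1 is negative at λ₂
  have hF1l2 : (2*(k:ℝ) - 1 - l2) * (l2 - ((δ:ℝ) - 2*k)) * (l2 - ((n:ℝ) - δ - 2))
      + 2*(k:ℝ) * ((δ:ℝ) - 2*k + 1) * (l2 - ((n:ℝ) - δ - 2))
      + 2*(k:ℝ) * ((n:ℝ) - δ - 1) * (l2 - ((δ:ℝ) - 2*k)) < 0 := by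
    set Fv : ℝ := (2*(k:ℝ) - 1 - l2) * (l2 - ((δ:ℝ) - 2*k)) * (l2 - ((n:ℝ) - δ - 2))
      + 2*(k:ℝ) * ((δ:ℝ) - 2*k + 1) * (l2 - ((n:ℝ) - δ - 2))
      + 2*(k:ℝ) * ((n:ℝ) - δ - 1) * (l2 - ((δ:ℝ) - 2*k)) with hFvdef
    set Pv : ℝ := ((δ:ℝ) - 2*k) *
        ((l2 - ((n:ℝ) - δ + 2*k - 2)) * ((n:ℝ) - δ + 2*k - 1 + (l2 - ((n:ℝ) - δ + 2*k - 2)))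
           * l2 * (l2 - ((δ:ℝ) - 2*k))
         + ((δ:ℝ) - 2*k + 1) * (l2 - δ) * (l2 - ((n:ℝ) - 2*δ + 2*k - 2))
           * (l2 - ((n:ℝ) - δ - 2))) with hPvdef
    have hid : Fv * (l2 * (l2 - ((n:ℝ) - 2*δ + 2*k - 2))) = -Pv := by
      rw [hFvdef, hPvdef]
      linear_combination (l2 - ((δ:ℝ) - 2*k)) * (l2 - ((n:ℝ) - δ - 2)) * hl2
    have hP : 0 < Pv := by
      rw [hPvdef]
      have h1 : (0:ℝ) < l2 - ((n:ℝ) - δ + 2*k - 2) := by linarith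
      have h2 : (0:ℝ) < (n:ℝ) - δ + 2*k - 1 + (l2 - ((n:ℝ) - δ + 2*k - 2)) := by linarith
      have h3 : (0:ℝ) < (δ:ℝ) - 2*k := by linarith
      have h4 : (0:ℝ) < (δ:ℝ) - 2*k + 1 := by linarith
      have h5 : (0:ℝ) < l2 - δ := by linarith
      exact mul_pos h3 (add_pos
        (mul_pos (mul_pos (mul_pos h1 h2) hl2pos) hl2dk)
        (mul_pos (mul_pos (mul_pos h4 h5) hl2s) hl2p))
    have hQ : 0 < l2 * (l2 - ((n:ℝ) - 2*δ + 2*k - 2)) := mul_pos hl2pos hl2s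
    by_contra hcon
    push_neg at hcon
    have : 0 ≤ Fv * (l2 * (l2 - ((n:ℝ) - 2*δ + 2*k - 2))) := mul_nonneg hcon hQ.le
    linarith
  -- existence of λ₁
  obtain ⟨l1, hl1mem, hl1⟩ : ∃ l ∈ Set.Ioo ((n:ℝ) - δ - 2) l2,
      (2*(k:ℝ) - 1 - l) * (l - ((δ:ℝ) - 2*k)) * (l - ((n:ℝ) - δ - 2))
      + 2*(k:ℝ) * ((δ:ℝ) - 2*k + 1) * (l - ((n:ℝ) - δ - 2))
      + 2*(k:ℝ) * ((n:ℝ) - δ - 1) * (l - ((δ:ℝ) - 2*k)) = 0 := by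
    set F1 : ℝ → ℝ := fun l => (2*(k:ℝ) - 1 - l) * (l - ((δ:ℝ) - 2*k)) * (l - ((n:ℝ) - δ - 2))
      + 2*(k:ℝ) * ((δ:ℝ) - 2*k + 1) * (l - ((n:ℝ) - δ - 2))
      + 2*(k:ℝ) * ((n:ℝ) - δ - 1) * (l - ((δ:ℝ) - 2*k)) with hF1def
    have hc : ContinuousOn F1 (Set.Icc ((n:ℝ) - δ - 2) l2) := by
      apply Continuous.continuousOn; rw [hF1def]; fun_prop
    have hle : (n:ℝ) - δ - 2 ≤ l2 := by linarith
    have hpos : 0 < F1 ((n:ℝ) - δ - 2) := by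
      have he : F1 ((n:ℝ) - δ - 2)
          = 2*(k:ℝ) * ((n:ℝ) - δ - 1) * ((n:ℝ) - 2*δ + 2*k - 2) := by
        rw [hF1def]; ring
      rw [he]
      exact mul_pos (mul_pos (by linarith) (by linarith)) (by linarith)
    have hneg : F1 l2 < 0 := hF1l2
    obtain ⟨l, hl, he⟩ := intermediate_value_Ioo' hle hc ⟨hneg, hpos⟩
    exact ⟨l, hl, he⟩
  obtain ⟨hl1p, hl1l2⟩ := hl1mem
  have hl1pos : (0:ℝ) < l1 := by linarith
  have hl1dk : 0 < l1 - ((δ:ℝ) - 2*k) := by linarith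
  have hl1pp : 0 < l1 - ((n:ℝ) - δ - 2) := by linarith
  -- eigenvector entries
  set b1 : ℝ := 2*(k:ℝ) / (l1 - ((δ:ℝ) - 2*k)) with hb1def
  set c1 : ℝ := 2*(k:ℝ) / (l1 - ((n:ℝ) - δ - 2)) with hc1def
  set b2 : ℝ := (δ:ℝ) / (l2 - ((n:ℝ) - 2*δ + 2*k - 2)) with hb2def
  set c2 : ℝ := (δ:ℝ) / l2 with hc2def
  have hb1pos : 0 < b1 := div_pos (by linarith) hl1dk
  have hc1pos : 0 < c1 := div_pos (by linarith) hl1pp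
  have hE1b : 2*(k:ℝ) + ((δ:ℝ) - 2*k) * b1 = l1 * b1 := by
    rw [hb1def]; field_simp; ring
  have hE1c : 2*(k:ℝ) + ((n:ℝ) - δ - 2) * c1 = l1 * c1 := by
    rw [hc1def]; field_simp; ring
  have hE1a : (2*(k:ℝ) - 1) + ((δ:ℝ) - 2*k + 1) * b1 + ((n:ℝ) - δ - 1) * c1 = l1 := by
    rw [hb1def, hc1def]
    field_simp
    linear_combination hl1
  have hE2b : (δ:ℝ) + ((n:ℝ) - 2*δ + 2*k - 2) * b2 = l2 * b2 := by
    rw [hb2def]; linear_combination (-(δ:ℝ)) * mul_inv_cancel₀ hl2s.ne'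
  have hE2c : (δ:ℝ) = l2 * c2 := by
    rw [hc2def]; field_simp
  have hE2a : ((δ:ℝ) - 1) + ((n:ℝ) - 2*δ + 2*k - 1) * b2 + ((δ:ℝ) - 2*k + 1) * c2 = l2 := by
    rw [hb2def, hc2def]
    linear_combination (l2 - ((n:ℝ) - 2*δ + 2*k - 2))⁻¹ * l2⁻¹ * hl2
      - (((δ:ℝ) - 1 - l2) * (l2 * l2⁻¹) + (δ:ℝ) * ((δ:ℝ) - 2*k + 1) * l2⁻¹) * mul_inv_cancel₀ hl2s.ne'
      - (((δ:ℝ) - 1 - l2) + (δ:ℝ) * ((n:ℝ) - 2*δ + 2*k - 1) * (l2 - ((n:ℝ) - 2*δ + 2*k - 2))⁻¹) * mul_inv_cancel₀ hl2pos.ne'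
  -- adjacency characterizations
  have hAdj1 : ∀ x y : Fin n, (joinTwoCliques n k δ).Adj x y ↔ x ≠ y ∧
      (x.val < 2*k ∨ y.val < 2*k ∨ (2*k ≤ x.val ∧ x.val < δ+1 ∧ 2*k ≤ y.val ∧ y.val < δ+1)
        ∨ (δ+1 ≤ x.val ∧ δ+1 ≤ y.val)) := by
    intro x y
    simp only [joinTwoCliques, SimpleGraph.fromRel_adj]
    constructor
    · rintro ⟨hne, h⟩; exact ⟨hne, by tauto⟩
    · rintro ⟨hne, h⟩; exact ⟨hne, by tauto⟩
  have hAdj2 : ∀ x y : Fin n, (joinGraph n δ (2*k)).Adj x y ↔ x ≠ y ∧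
      (x.val < δ ∨ y.val < δ ∨ (x.val < m2 ∧ y.val < m2)) := by
    intro x y
    simp only [joinGraph, SimpleGraph.fromRel_adj, ← hm2def]
    constructor
    · rintro ⟨hne, h⟩; exact ⟨hne, by tauto⟩
    · rintro ⟨hne, h⟩; exact ⟨hne, by tauto⟩
  -- eigenvectors
  set w1 : ℕ → ℝ := fun x => if x < 2*k then 1 else if x < δ+1 then b1 else c1 with hw1def
  set y1 : Fin n → ℝ := fun j => w1 j.val with hy1def
  set w2 : ℕ → ℝ := fun x => if x < δ then 1 else if x < m2 then b2 else c2 with hw2def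
  set y2 : Fin n → ℝ := fun j => w2 j.val with hy2def
  have hy1pos : ∀ i : Fin n, 0 < y1 i := by
    intro i
    simp only [hy1def, hw1def]
    split_ifs
    · exact one_pos
    · exact hb1pos
    · exact hc1pos
  -- row computations for joinTwoCliques
  have hrow1 : ∀ i : Fin n, ((joinTwoCliques n k δ).adjMatrix ℝ *ᵥ y1) i = l1 * y1 i := by
    intro i
    rw [mulVec_adj]
    rcases Nat.lt_or_ge i.val (2*k) with hcs | hcs
    · have hF0 : ∀ j : Fin n, j ≠ i →
          (if (joinTwoCliques n k δ).Adj i j then y1 j else 0) = w1 j.val := by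
        intro j hj
        rw [if_pos ((hAdj1 i j).2 ⟨Ne.symm hj, by omega⟩)]
      rw [row_sum _ y1 w1 i hF0,
        sum_range_piecewise (2*k) (δ+1) n h2kδ hδ1n w1 1 b1 c1
          (fun x hx => by simp only [hw1def]; rw [if_pos hx])
          (fun x hx1 hx2 => by simp only [hw1def]; rw [if_neg (by omega), if_pos hx2])
          (fun x hx1 hx2 => by simp only [hw1def]; rw [if_neg (by omega), if_neg (by omega)])]
      have hwi : w1 i.val = 1 := by simp only [hw1def]; rw [if_pos hcs]
      have hyi : y1 i = 1 := by simp only [hy1def]; exact hwi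
      rw [hwi, hyi, mul_one]
      push_cast
      linear_combination hE1a
    · rcases Nat.lt_or_ge i.val (δ+1) with hcs2 | hcs2
      · have hF0 : ∀ j : Fin n, j ≠ i →
            (if (joinTwoCliques n k δ).Adj i j then y1 j else 0)
              = (if j.val < 2*k then (1:ℝ) else if j.val < δ+1 then b1 else 0) := by
          intro j hj
          by_cases hj2 : j.val < δ + 1
          · rw [if_pos ((hAdj1 i j).2 ⟨Ne.symm hj, by omega⟩)]
            simp only [hy1def, hw1def]
            by_cases hj3 : j.val < 2*k
            · rw [if_pos hj3, if_pos hj3]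
            · rw [if_neg hj3, if_neg hj3, if_pos hj2, if_pos hj2]
          · rw [if_neg (fun hA => by have h := ((hAdj1 i j).1 hA).2; omega),
              if_neg (by omega), if_neg hj2]
        rw [row_sum _ y1 (fun x => if x < 2*k then (1:ℝ) else if x < δ+1 then b1 else 0) i hF0,
          sum_range_piecewise (2*k) (δ+1) n h2kδ hδ1n _ 1 b1 0
            (fun x hx => by rw [if_pos hx])
            (fun x hx1 hx2 => by rw [if_neg (by omega), if_pos hx2])
            (fun x hx1 hx2 => by rw [if_neg (by omega), if_neg (by omega)])]
        have hFi : (if i.val < 2*k then (1:ℝ) else if i.val < δ+1 then b1 else 0) = b1 := by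
          rw [if_neg (by omega), if_pos hcs2]
        have hyi : y1 i = b1 := by
          simp only [hy1def, hw1def]; rw [if_neg (by omega), if_pos hcs2]
        rw [hFi, hyi]
        push_cast
        linear_combination hE1b
      · have hF0 : ∀ j : Fin n, j ≠ i →
            (if (joinTwoCliques n k δ).Adj i j then y1 j else 0)
              = (if j.val < 2*k then (1:ℝ) else if j.val < δ+1 then 0 else c1) := by
          intro j hj
          by_cases hj3 : j.val < 2*k
          · rw [if_pos ((hAdj1 i j).2 ⟨Ne.symm hj, by omega⟩), if_pos hj3]
            simp only [hy1def, hw1def]; rw [if_pos hj3]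
          · by_cases hj2 : j.val < δ + 1
            · rw [if_neg (fun hA => by have h := ((hAdj1 i j).1 hA).2; omega),
                if_neg hj3, if_pos hj2]
            · rw [if_pos ((hAdj1 i j).2 ⟨Ne.symm hj, by omega⟩), if_neg hj3, if_neg hj2]
              simp only [hy1def, hw1def]; rw [if_neg hj3, if_neg hj2]
        rw [row_sum _ y1 (fun x => if x < 2*k then (1:ℝ) else if x < δ+1 then 0 else c1) i hF0,
          sum_range_piecewise (2*k) (δ+1) n h2kδ hδ1n _ 1 0 c1
            (fun x hx => by rw [if_pos hx])
            (fun x hx1 hx2 => by rw [if_neg (by omega), if_pos hx2])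
            (fun x hx1 hx2 => by rw [if_neg (by omega), if_neg (by omega)])]
        have hFi : (if i.val < 2*k then (1:ℝ) else if i.val < δ+1 then 0 else c1) = c1 := by
          rw [if_neg (by omega), if_neg (by omega)]
        have hyi : y1 i = c1 := by
          simp only [hy1def, hw1def]; rw [if_neg (by omega), if_neg (by omega)]
        rw [hFi, hyi]
        push_cast
        linear_combination hE1c
  -- row computations for joinGraph
  have hrow2 : ∀ i : Fin n, ((joinGraph n δ (2*k)).adjMatrix ℝ *ᵥ y2) i = l2 * y2 i := by
    intro i
    rw [mulVec_adj]
    rcases Nat.lt_or_ge i.val δ with hcs | hcs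
    · have hF0 : ∀ j : Fin n, j ≠ i →
          (if (joinGraph n δ (2*k)).Adj i j then y2 j else 0) = w2 j.val := by
        intro j hj
        rw [if_pos ((hAdj2 i j).2 ⟨Ne.symm hj, by omega⟩)]
      rw [row_sum _ y2 w2 i hF0,
        sum_range_piecewise δ m2 n hm2a hm2b w2 1 b2 c2
          (fun x hx => by simp only [hw2def]; rw [if_pos hx])
          (fun x hx1 hx2 => by simp only [hw2def]; rw [if_neg (by omega), if_pos hx2])
          (fun x hx1 hx2 => by simp only [hw2def]; rw [if_neg (by omega), if_neg (by omega)])]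
      have hwi : w2 i.val = 1 := by simp only [hw2def]; rw [if_pos hcs]
      have hyi : y2 i = 1 := by simp only [hy2def]; exact hwi
      rw [hwi, hyi, hM2, mul_one]
      linear_combination hE2a
    · rcases Nat.lt_or_ge i.val m2 with hcs2 | hcs2
      · have hF0 : ∀ j : Fin n, j ≠ i →
            (if (joinGraph n δ (2*k)).Adj i j then y2 j else 0)
              = (if j.val < δ then (1:ℝ) else if j.val < m2 then b2 else 0) := by
          intro j hj
          by_cases hj2 : j.val < m2
          · rw [if_pos ((hAdj2 i j).2 ⟨Ne.symm hj, by omega⟩)]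
            simp only [hy2def, hw2def]
            by_cases hj3 : j.val < δ
            · rw [if_pos hj3, if_pos hj3]
            · rw [if_neg hj3, if_neg hj3, if_pos hj2, if_pos hj2]
          · rw [if_neg (fun hA => by have h := ((hAdj2 i j).1 hA).2; omega),
              if_neg (by omega), if_neg hj2]
        rw [row_sum _ y2 (fun x => if x < δ then (1:ℝ) else if x < m2 then b2 else 0) i hF0,
          sum_range_piecewise δ m2 n hm2a hm2b _ 1 b2 0
            (fun x hx => by rw [if_pos hx])
            (fun x hx1 hx2 => by rw [if_neg (by omega), if_pos hx2])
            (fun x hx1 hx2 => by rw [if_neg (by omega), if_neg (by omega)])]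
        have hFi : (if i.val < δ then (1:ℝ) else if i.val < m2 then b2 else 0) = b2 := by
          rw [if_neg (by omega), if_pos hcs2]
        have hyi : y2 i = b2 := by
          simp only [hy2def, hw2def]; rw [if_neg (by omega), if_pos hcs2]
        rw [hFi, hyi, hM2]
        linear_combination hE2b
      · have hF0 : ∀ j : Fin n, j ≠ i →
            (if (joinGraph n δ (2*k)).Adj i j then y2 j else 0)
              = (if j.val < δ then (1:ℝ) else 0) := by
          intro j hj
          by_cases hj3 : j.val < δ
          · rw [if_pos ((hAdj2 i j).2 ⟨Ne.symm hj, by omega⟩), if_pos hj3]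
            simp only [hy2def, hw2def]; rw [if_pos hj3]
          · rw [if_neg (fun hA => by have h := ((hAdj2 i j).1 hA).2; omega), if_neg hj3]
        rw [row_sum _ y2 (fun x => if x < δ then (1:ℝ) else 0) i hF0,
          sum_range_piecewise δ δ n (le_refl δ) hδn _ 1 0 0
            (fun x hx => by rw [if_pos hx])
            (fun x hx1 hx2 => absurd (lt_of_lt_of_le hx2 hx1) (lt_irrefl x))
            (fun x hx1 hx2 => by rw [if_neg (by omega)])]
        have hFi : (if i.val < δ then (1:ℝ) else 0) = 0 := by rw [if_neg (by omega)]
        have hyi : y2 i = c2 := by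
          simp only [hy2def, hw2def]; rw [if_neg (by omega), if_neg (by omega)]
        rw [hFi, hyi]
        linear_combination hE2c
  have hy2ne : y2 ≠ 0 := by
    intro h
    have h0 := congrFun h (⟨0, by omega⟩ : Fin n)
    simp only [hy2def, hw2def, Pi.zero_apply] at h0
    rw [if_pos (by omega : (0:ℕ) < δ)] at h0
    exact one_ne_zero h0
  -- assemble
  unfold specRad
  refine lt_of_le_of_lt (Real.sSup_le ?_ (by linarith : (0:ℝ) ≤ l1)) ?_
  · rintro t ⟨v, hv, he⟩
    exact eig_le _ y1 hy1pos l1 (fun i => (hrow1 i).le) hv he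
  · refine lt_of_lt_of_le hl1l2 (le_csSup ⟨(n:ℝ), ?_⟩ ⟨y2, hy2ne, ?_⟩)
    · rintro t ⟨v, hv, he⟩
      refine eig_le _ (fun _ => (1:ℝ)) (fun _ => one_pos) (n:ℝ) (fun i => ?_) hv he
      rw [mulVec_adj]
      calc (∑ j, if (joinGraph n δ (2*k)).Adj i j then (1:ℝ) else 0)
          ≤ ∑ _j : Fin n, (1:ℝ) := Finset.sum_le_sum (fun j _ => by split_ifs <;> norm_num)
        _ = (n:ℝ) * 1 := by simp
    · exact funext fun i => by rw [hrow2 i]; simp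
end

section
/- For n ≥ 4s + 2k + 2 and k ≥ 1 (with s ≥ 1), ρ(K_{s,s+k+1} ∇₁ K_{n/2−s, n/2−s−k−1}) < ρ(K_{s−1,s+k} ∇₁ K_{n/2−s+1, n/2−s−k}). -/
open SimpleGraph Matrix Finset

set_option maxHeartbeats 1000000

/-- The graph `K_{s,s+k+1} ∇₁ K_{n/2-s, n/2-s-k-1}` on `Fin n`.
Part `X = [0, n/2)` with `X₁ = [0, s)`, part `Y = [n/2, n)` with
`Y₁ = [n/2, n/2+s+k+1)`; `X₁` is joined to all of `Y`, and `X₂ = X \ X₁`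
is joined to `Y₂ = Y \ Y₁`. -/
def bipJoin (n s k : ℕ) : SimpleGraph (Fin n) :=
  SimpleGraph.fromRel (fun x y =>
    x.val < n / 2 ∧ n / 2 ≤ y.val ∧ (x.val < s ∨ n / 2 + s + k + 1 ≤ y.val))

lemma adjMatrix_instEq {V : Type*} (G : SimpleGraph V)
    (inst1 inst2 : DecidableRel G.Adj) :
    @SimpleGraph.adjMatrix ℝ V G inst1 _ _ = @SimpleGraph.adjMatrix ℝ V G inst2 _ _ := by
  rw [Subsingleton.elim inst1 inst2]

lemma specRad_eq_of_eigen {V : Type*} [Fintype V] (G : SimpleGraph V)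
    [inst : DecidableRel G.Adj]
    (w : V → ℝ) (ρ : ℝ) (hρ : 0 < ρ)
    (hw0 : ∀ i, 0 ≤ w i) (hwne : ∃ i, 0 < w i)
    (hiso : ∀ j, w j = 0 → ∀ i, ¬ G.Adj j i)
    (heig : G.adjMatrix ℝ *ᵥ w = ρ • w) :
    specRad G = ρ := by
  classical
  have hunf : specRad G =
      sSup {t : ℝ | ∃ v : V → ℝ, v ≠ 0 ∧ G.adjMatrix ℝ *ᵥ v = t • v} := by
    rw [specRad]
    congr 1
    ext t
    rw [adjMatrix_instEq G (Classical.decRel G.Adj) inst]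
  rw [hunf]
  set S := {t : ℝ | ∃ v : V → ℝ, v ≠ 0 ∧ G.adjMatrix ℝ *ᵥ v = t • v} with hS
  have hrow : ∀ (i : V) (v : V → ℝ),
      (G.adjMatrix ℝ *ᵥ v) i = ∑ j : V, (if G.Adj i j then (1:ℝ) else 0) * v j := by
    intro i v
    simp [Matrix.mulVec, dotProduct, SimpleGraph.adjMatrix]
  have hwne' : w ≠ 0 := by
    obtain ⟨i, hi⟩ := hwne
    intro h; rw [h] at hi; exact lt_irrefl 0 hi
  have hmem : ρ ∈ S := ⟨w, hwne', heig⟩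
  -- upper bound
  have hub : ∀ t ∈ S, t ≤ ρ := by
    intro t ht
    obtain ⟨v, hv0, hv⟩ := ht
    have claim : ∀ u : V → ℝ, (G.adjMatrix ℝ *ᵥ u = t • u) → (∃ i, 0 < u i) → t ≤ ρ := by
      intro u hu ⟨i0, hi0⟩
      by_cases hex : ∃ i, 0 < u i ∧ 0 < w i
      · obtain ⟨i1, hu1, hw1⟩ := hex
        have hFne : (univ.filter (fun i => 0 < w i)).Nonempty :=
          ⟨i1, by simp [hw1]⟩
        obtain ⟨j0, hj0F, hj0max⟩ :=
          (univ.filter (fun i => 0 < w i)).exists_max_image (fun i => u i / w i) hFne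
        have hwj0 : 0 < w j0 := by simpa using hj0F
        set c := u j0 / w j0 with hc
        have hcpos : 0 < c :=
          lt_of_lt_of_le (div_pos hu1 hw1) (hj0max i1 (by simp [hw1]))
        have hterm : ∀ j, (if G.Adj j0 j then (1:ℝ) else 0) * u j ≤
            (if G.Adj j0 j then (1:ℝ) else 0) * (c * w j) := by
          intro j
          by_cases hadj : G.Adj j0 j
          · simp only [hadj, if_true, one_mul]
            rcases (hw0 j).eq_or_lt with h0 | h0
            · exact absurd hadj.symm (hiso j h0.symm j0)
            · have hj : u j / w j ≤ c := hj0max j (by simp [h0])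
              calc u j = (u j / w j) * w j := by field_simp
                _ ≤ c * w j := by
                    exact mul_le_mul_of_nonneg_right hj h0.le
          · simp [hadj]
        have hsum : t * u j0 ≤ c * (ρ * w j0) := by
          have e1 : t * u j0 = (G.adjMatrix ℝ *ᵥ u) j0 := by
            rw [hu]; simp [Pi.smul_apply]
          have e2 : (G.adjMatrix ℝ *ᵥ u) j0 ≤ ∑ j : V, (if G.Adj j0 j then (1:ℝ) else 0) * (c * w j) := by
            rw [hrow]
            exact Finset.sum_le_sum (fun j _ => hterm j)
          have e3 : ∑ j : V, (if G.Adj j0 j then (1:ℝ) else 0) * (c * w j)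
              = c * (G.adjMatrix ℝ *ᵥ w) j0 := by
            rw [hrow, Finset.mul_sum]
            apply Finset.sum_congr rfl
            intro j _; ring
          have e4 : (G.adjMatrix ℝ *ᵥ w) j0 = ρ * w j0 := by
            rw [heig]; simp [Pi.smul_apply]
          rw [e1]
          calc (G.adjMatrix ℝ *ᵥ u) j0 ≤ _ := e2
            _ = c * (ρ * w j0) := by rw [e3, e4]
        have huj0 : u j0 = c * w j0 := by
          rw [hc]; field_simp
        have hupos : 0 < u j0 := by rw [huj0]; positivity
        have : t * u j0 ≤ ρ * u j0 := by
          rw [huj0]; calc t * (c * w j0) ≤ c * (ρ * w j0) := by rw [← huj0]; exact hsum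
            _ = ρ * (c * w j0) := by ring
        exact le_of_mul_le_mul_right (by linarith [this]) hupos
      · push_neg at hex
        have hwi0 : w i0 = 0 := by
          rcases (hw0 i0).eq_or_lt with h | h
          · exact h.symm
          · linarith [hex i0 hi0]
        have hz : (G.adjMatrix ℝ *ᵥ u) i0 = 0 := by
          rw [hrow]
          apply Finset.sum_eq_zero
          intro j _
          simp [hiso i0 hwi0 j]
        have : t * u i0 = 0 := by
          rw [← hz, hu]; simp [Pi.smul_apply]
        have ht0 : t = 0 := by
          rcases mul_eq_zero.mp this with h | h
          · exact h
          · exact absurd h (ne_of_gt hi0)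
        rw [ht0]; exact hρ.le
    by_cases hpos : ∃ i, 0 < v i
    · exact claim v hv hpos
    · push_neg at hpos
      have hvne : ∃ i, v i ≠ 0 := Function.ne_iff.mp hv0
      obtain ⟨i, hi⟩ := hvne
      have hneg : 0 < (-v) i := by
        simp only [Pi.neg_apply]
        rcases lt_or_eq_of_le (hpos i) with h | h
        · linarith
        · exact absurd h hi
      apply claim (-v) _ ⟨i, hneg⟩
      rw [Matrix.mulVec_neg, hv]
      ext j; simp
  exact le_antisymm (csSup_le ⟨ρ, hmem⟩ hub) (le_csSup ⟨ρ, hub⟩ hmem)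

noncomputable def lamRoot (a b c d : ℝ) : ℝ :=
  ((a*b + a*d + c*d) + Real.sqrt ((a*b + a*d + c*d)^2 - 4*(a*b*c*d)))/2

lemma lamRoot_disc (a b c d : ℝ) (ha : 0 ≤ a) (hb : 0 ≤ b) (hc : 0 ≤ c) (hd : 0 ≤ d) :
    0 ≤ (a*b + a*d + c*d)^2 - 4*(a*b*c*d) := by
  nlinarith [sq_nonneg (a*b - c*d), sq_nonneg (a*d),
    mul_nonneg (mul_nonneg ha hd) (mul_nonneg (mul_nonneg ha hb) (mul_nonneg hc hd)),
    mul_nonneg (mul_nonneg ha hd) (add_nonneg (mul_nonneg ha hb) (mul_nonneg hc hd))]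

lemma lamRoot_sq (a b c d : ℝ) (ha : 0 ≤ a) (hb : 0 ≤ b) (hc : 0 ≤ c) (hd : 0 ≤ d) :
    (lamRoot a b c d)^2 = (a*b + a*d + c*d) * lamRoot a b c d - a*b*c*d := by
  have h := Real.sq_sqrt (lamRoot_disc a b c d ha hb hc hd)
  unfold lamRoot
  linear_combination h/4

lemma lamRoot_half (a b c d : ℝ) :
    a*b + a*d + c*d ≤ 2 * lamRoot a b c d := by
  have := Real.sqrt_nonneg ((a*b + a*d + c*d)^2 - 4*(a*b*c*d))
  unfold lamRoot; linarith

lemma lamRoot_gt_ab (a b c d : ℝ) (ha : 0 ≤ a) (hb : 1 ≤ b) (hc : 1 ≤ c) (hd : 1 ≤ d) :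
    a * b < lamRoot a b c d := by
  set l := lamRoot a b c d with hl
  have h1 : l^2 = (a*b + a*d + c*d) * l - a*b*c*d :=
    lamRoot_sq a b c d ha (by linarith) (by linarith) (by linarith)
  have h2 : a*b + a*d + c*d ≤ 2 * l := lamRoot_half a b c d
  by_contra hcon
  push_neg at hcon
  have e0 : 0 ≤ (a*b - l) * (a*b + l - (a*b + a*d + c*d)) := by
    apply mul_nonneg <;> linarith
  have e1 : a*a*b*d ≤ 0 := by nlinarith [e0, h1]
  have hbd : (1:ℝ) ≤ b*d := by nlinarith
  have e2 : a*a ≤ a*a*b*d := by nlinarith [mul_nonneg (sq_nonneg a) (sub_nonneg.mpr hbd)]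
  have e3 : a = 0 := by
    rcases ha.eq_or_lt with h | h
    · exact h.symm
    · nlinarith
  rw [e3] at hcon h2
  nlinarith

lemma lamRoot_gt_cd (a b c d : ℝ) (ha : 1 ≤ a) (hb : 1 ≤ b) (hc : 1 ≤ c) (hd : 1 ≤ d) :
    c * d < lamRoot a b c d := by
  set l := lamRoot a b c d with hl
  have h1 : l^2 = (a*b + a*d + c*d) * l - a*b*c*d :=
    lamRoot_sq a b c d (by linarith) (by linarith) (by linarith) (by linarith)
  have h2 : a*b + a*d + c*d ≤ 2 * l := lamRoot_half a b c d
  by_contra hcon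
  push_neg at hcon
  have e0 : 0 ≤ (c*d - l) * (c*d + l - (a*b + a*d + c*d)) := by
    apply mul_nonneg <;> linarith
  have e1 : a*c*d*d ≤ 0 := by nlinarith [e0, h1]
  have h3 : (1:ℝ) ≤ a*c := by nlinarith
  have h4 : (1:ℝ) ≤ a*c*d := by nlinarith
  have h5 : (1:ℝ) ≤ a*c*d*d := by nlinarith
  linarith

lemma lam_lt (S K M l1 l2 : ℝ) (hS : 1 ≤ S) (hK : 1 ≤ K) (hM : 2*S + K + 1 ≤ M)
    (e1 : l1^2 = (S*(S+K+1) + S*(M-S-K-1) + (M-S)*(M-S-K-1))*l1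
          - S*(S+K+1)*((M-S)*(M-S-K-1)))
    (hcd : (M-S)*(M-S-K-1) < l1)
    (e2 : l2^2 = ((S-1)*(S-1+K+1) + (S-1)*(M-(S-1)-K-1) + (M-(S-1))*(M-(S-1)-K-1))*l2
          - (S-1)*(S-1+K+1)*((M-(S-1))*(M-(S-1)-K-1)))
    (hl2 : (S-1)*(S-1+K+1) + (S-1)*(M-(S-1)-K-1) + (M-(S-1))*(M-(S-1)-K-1) ≤ 2*l2) :
    l1 < l2 := by
  have hp : (0:ℝ) ≤ S - 1 := by linarith
  have hq : (0:ℝ) ≤ K - 1 := by linarith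
  have hu : (0:ℝ) ≤ M - 2*S - K - 1 := by linarith
  -- key polynomial inequality: D2 - D1 ≤ (M-2S-K) * c1*d1
  have hE : (S-1)*(S-1+K+1)*((M-(S-1))*(M-(S-1)-K-1))
      - S*(S+K+1)*((M-S)*(M-S-K-1))
      ≤ (M - 2*S - K) * ((M-S)*(M-S-K-1)) := by
    linarith [hp, hq, hu, mul_nonneg hp hq, mul_nonneg hp hu, mul_nonneg hq hu,
      mul_nonneg (mul_nonneg hp hp) hp, mul_nonneg (mul_nonneg hp hp) hq,
      mul_nonneg (mul_nonneg hp hp) hu, mul_nonneg (mul_nonneg hp hq) hq,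
      mul_nonneg (mul_nonneg hp hq) hu, mul_nonneg (mul_nonneg hp hu) hu,
      mul_nonneg (mul_nonneg hq hq) hq, mul_nonneg (mul_nonneg hq hq) hu,
      mul_nonneg (mul_nonneg hq hu) hu, mul_nonneg (mul_nonneg hu hu) hu,
      mul_nonneg hp hp, mul_nonneg hq hq, mul_nonneg hu hu]
  have hT : (1:ℝ) ≤ M - 2*S - K := by linarith
  have hcd0 : (0:ℝ) ≤ (M-S)*(M-S-K-1) := by
    apply mul_nonneg <;> linarith
  -- f2(l1) < 0
  have hf2 : l1^2 - ((S-1)*(S-1+K+1) + (S-1)*(M-(S-1)-K-1) + (M-(S-1))*(M-(S-1)-K-1))*l1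
      + (S-1)*(S-1+K+1)*((M-(S-1))*(M-(S-1)-K-1)) < 0 := by
    have hstep : (M - 2*S - K) * ((M-S)*(M-S-K-1)) < (M - 2*S - K) * l1 :=
      mul_lt_mul_of_pos_left hcd (by linarith)
    nlinarith [e1, hE, hstep]
  by_contra hcon
  push_neg at hcon
  have e0 : 0 ≤ (l1 - l2) * (l1 + l2 -
      ((S-1)*(S-1+K+1) + (S-1)*(M-(S-1)-K-1) + (M-(S-1))*(M-(S-1)-K-1))) := by
    apply mul_nonneg <;> linarith
  nlinarith [e0, e2, hf2]

lemma bipJoin_adj_iff (n a k N : ℕ) (hn2 : n = 2*N) (hN : a + k + 2 ≤ N) (i j : Fin n) :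
    (bipJoin n a k).Adj i j ↔
      (((i:ℕ) < a ∧ N ≤ (j:ℕ)) ∨ ((j:ℕ) < a ∧ N ≤ (i:ℕ)) ∨
       (a ≤ (i:ℕ) ∧ (i:ℕ) < N ∧ N + a + k + 1 ≤ (j:ℕ)) ∨
       (a ≤ (j:ℕ) ∧ (j:ℕ) < N ∧ N + a + k + 1 ≤ (i:ℕ))) := by
  have hi := i.isLt
  have hj := j.isLt
  have hN2 : n / 2 = N := by omega
  simp only [bipJoin, SimpleGraph.fromRel_adj, Ne, Fin.ext_iff, hN2]
  omega

lemma sum_ind (n u v : ℕ) (hv : v ≤ n) (c : ℝ) :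
    ∑ m ∈ Finset.range n, (if u ≤ m ∧ m < v then c else 0) = ((v - u : ℕ) : ℝ) * c := by
  classical
  rw [← Finset.sum_filter]
  have hset : (Finset.range n).filter (fun m => u ≤ m ∧ m < v) = Finset.Ico u v := by
    ext m
    simp only [Finset.mem_filter, Finset.mem_range, Finset.mem_Ico]
    omega
  rw [hset, Finset.sum_const, Nat.card_Ico, nsmul_eq_mul]

lemma bipJoin_specRad (n a k N : ℕ) (hn2 : n = 2 * N) (hN : a + k + 2 ≤ N)
    (ρ : ℝ) (hρ : 0 < ρ)
    (hab : (a : ℝ) * ((a:ℝ) + (k:ℝ) + 1) < ρ^2)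
    (hq : ρ^4 = ((a:ℝ) * ((a:ℝ) + (k:ℝ) + 1) + (a:ℝ) * ((N:ℝ) - (a:ℝ) - (k:ℝ) - 1)
            + ((N:ℝ) - (a:ℝ)) * ((N:ℝ) - (a:ℝ) - (k:ℝ) - 1)) * ρ^2
          - (a:ℝ) * ((a:ℝ) + (k:ℝ) + 1) * (((N:ℝ) - (a:ℝ)) * ((N:ℝ) - (a:ℝ) - (k:ℝ) - 1))) :
    specRad (bipJoin n a k) = ρ := by
  classical
  have haN : (a:ℝ) + (k:ℝ) + 2 ≤ (N:ℝ) := by exact_mod_cast hN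
  set DD : ℝ := (N:ℝ) - (a:ℝ) - (k:ℝ) - 1 with hDDdef
  have hDD : 0 < DD := by rw [hDDdef]; linarith
  have hba : 0 < ρ^2 - (a:ℝ)*((a:ℝ)+(k:ℝ)+1) := by linarith
  have ha0 : (0:ℝ) ≤ (a:ℝ) := Nat.cast_nonneg a
  set al : ℝ := DD * ρ^2 with hal
  set be : ℝ := DD * (ρ^2 - (a:ℝ)*((a:ℝ)+(k:ℝ)+1)) with hbe
  set ga : ℝ := (a:ℝ) * DD * ρ with hga
  set de : ℝ := ρ * (ρ^2 - (a:ℝ)*((a:ℝ)+(k:ℝ)+1)) with hde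
  have hal1 : 0 < al := by rw [hal]; positivity
  have hbe1 : 0 < be := by rw [hbe]; exact mul_pos hDD hba
  have hde1 : 0 < de := by rw [hde]; exact mul_pos hρ hba
  have hga0 : 0 ≤ ga := by
    rw [hga]; exact mul_nonneg (mul_nonneg ha0 hDD.le) hρ.le
  set W : ℕ → ℝ := fun m =>
    if m < a then al else if m < N then be else if m < N + a + k + 1 then ga else de with hW
  have c1 : ((N + a + k + 1 - N : ℕ) : ℝ) = (a:ℝ) + (k:ℝ) + 1 := by
    have h : N + a + k + 1 - N = a + k + 1 := by omega
    rw [h]; push_cast; ring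
  have c2 : ((n - (N + a + k + 1) : ℕ) : ℝ) = DD := by
    have h : n - (N + a + k + 1) + (a + k + 1) = N := by omega
    have h2 := congrArg (fun t : ℕ => (t:ℝ)) h
    push_cast at h2
    rw [hDDdef]; linarith
  have c3 : ((a - 0 : ℕ) : ℝ) = (a:ℝ) := by norm_num
  have c4 : ((N - a : ℕ) : ℝ) = (N:ℝ) - (a:ℝ) := by
    have h : a ≤ N := by omega
    push_cast [h]; ring
  refine specRad_eq_of_eigen (bipJoin n a k) (fun j : Fin n => W (j:ℕ)) ρ hρ ?_ ?_ ?_ ?_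
  · intro i
    simp only [hW]
    split_ifs
    · exact hal1.le
    · exact hbe1.le
    · exact hga0
    · exact hde1.le
  · have hn0 : 0 < n := by omega
    refine ⟨⟨0, hn0⟩, ?_⟩
    simp only [hW]
    split_ifs <;> first | exact hal1 | exact hbe1 | omega
  · intro j hj i hadj
    simp only [hW] at hj
    split_ifs at hj with h1 h2 h3
    · exact absurd hj (ne_of_gt hal1)
    · exact absurd hj (ne_of_gt hbe1)
    · have ha' : (a:ℝ) = 0 := by
        rw [hga] at hj
        rcases mul_eq_zero.mp hj with h | h
        · rcases mul_eq_zero.mp h with h' | h'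
          · exact h'
          · exact absurd h' (ne_of_gt hDD)
        · exact absurd h (ne_of_gt hρ)
      have ha0' : a = 0 := by exact_mod_cast ha'
      rw [bipJoin_adj_iff n a k N hn2 hN] at hadj
      omega
    · exact absurd hj (ne_of_gt hde1)
  · funext i
    have hrow : ((bipJoin n a k).adjMatrix ℝ *ᵥ (fun j : Fin n => W (j:ℕ))) i
        = ∑ j : Fin n, (if (bipJoin n a k).Adj i j then (1:ℝ) else 0) * W (j:ℕ) := by
      simp [Matrix.mulVec, dotProduct, SimpleGraph.adjMatrix]
    have hsmul : (ρ • (fun j : Fin n => W (j:ℕ))) i = ρ * W (i:ℕ) := rfl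
    rw [hrow, hsmul]
    have hilt := i.isLt
    by_cases h1 : (i:ℕ) < a
    · have hAdj : ∀ j : Fin n, ((bipJoin n a k).Adj i j ↔ N ≤ (j:ℕ)) := by
        intro j
        rw [bipJoin_adj_iff n a k N hn2 hN]
        have := j.isLt
        omega
      have hterm : ∀ j : Fin n, (if (bipJoin n a k).Adj i j then (1:ℝ) else 0) * W (j:ℕ)
          = (fun m => (if N ≤ m ∧ m < N+a+k+1 then ga else 0)
              + (if N+a+k+1 ≤ m ∧ m < n then de else 0)) (j:ℕ) := by
        intro j
        have hjlt := j.isLt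
        by_cases h : N ≤ (j:ℕ)
        · rw [if_pos ((hAdj j).mpr h), one_mul]
          simp only [hW]
          split_ifs <;> first | ring1 | (exfalso; omega)
        · rw [if_neg (fun hc => h ((hAdj j).mp hc)), zero_mul]
          simp only []
          split_ifs <;> first | ring1 | (exfalso; omega)
      rw [Finset.sum_congr rfl (fun j _ => hterm j),
        Fin.sum_univ_eq_sum_range (fun m => (if N ≤ m ∧ m < N+a+k+1 then ga else 0)
              + (if N+a+k+1 ≤ m ∧ m < n then de else 0)) n,
        Finset.sum_add_distrib, sum_ind n N (N+a+k+1) (by omega) ga,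
        sum_ind n (N+a+k+1) n (le_refl n) de, c1, c2]
      have hWi : W (i:ℕ) = al := by simp only [hW]; rw [if_pos h1]
      rw [hWi, hal, hga, hde]; ring
    · by_cases h2 : (i:ℕ) < N
      · have hAdj : ∀ j : Fin n, ((bipJoin n a k).Adj i j ↔ N+a+k+1 ≤ (j:ℕ)) := by
          intro j
          rw [bipJoin_adj_iff n a k N hn2 hN]
          have := j.isLt
          omega
        have hterm : ∀ j : Fin n, (if (bipJoin n a k).Adj i j then (1:ℝ) else 0) * W (j:ℕ)
            = (fun m => (if N+a+k+1 ≤ m ∧ m < n then de else 0)) (j:ℕ) := by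
          intro j
          have hjlt := j.isLt
          by_cases h : N+a+k+1 ≤ (j:ℕ)
          · rw [if_pos ((hAdj j).mpr h), one_mul]
            simp only [hW]
            split_ifs <;> first | ring1 | (exfalso; omega)
          · rw [if_neg (fun hc => h ((hAdj j).mp hc)), zero_mul]
            simp only []
            split_ifs <;> first | ring1 | (exfalso; omega)
        rw [Finset.sum_congr rfl (fun j _ => hterm j),
          Fin.sum_univ_eq_sum_range (fun m => (if N+a+k+1 ≤ m ∧ m < n then de else 0)) n,
          sum_ind n (N+a+k+1) n (le_refl n) de, c2]
        have hWi : W (i:ℕ) = be := by simp only [hW]; rw [if_neg h1, if_pos h2]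
        rw [hWi, hbe, hde]; ring
      · by_cases h3 : (i:ℕ) < N + a + k + 1
        · have hAdj : ∀ j : Fin n, ((bipJoin n a k).Adj i j ↔ (j:ℕ) < a) := by
            intro j
            rw [bipJoin_adj_iff n a k N hn2 hN]
            have := j.isLt
            omega
          have hterm : ∀ j : Fin n, (if (bipJoin n a k).Adj i j then (1:ℝ) else 0) * W (j:ℕ)
              = (fun m => (if 0 ≤ m ∧ m < a then al else 0)) (j:ℕ) := by
            intro j
            have hjlt := j.isLt
            by_cases h : (j:ℕ) < a
            · rw [if_pos ((hAdj j).mpr h), one_mul]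
              simp only [hW]
              split_ifs <;> first | ring1 | (exfalso; omega)
            · rw [if_neg (fun hc => h ((hAdj j).mp hc)), zero_mul]
              simp only []
              split_ifs <;> first | ring1 | (exfalso; omega)
          rw [Finset.sum_congr rfl (fun j _ => hterm j),
            Fin.sum_univ_eq_sum_range (fun m => (if 0 ≤ m ∧ m < a then al else 0)) n,
            sum_ind n 0 a (by omega) al, c3]
          have hWi : W (i:ℕ) = ga := by
            simp only [hW]; rw [if_neg h1, if_neg h2, if_pos h3]
          rw [hWi, hal, hga]; ring
        · have hAdj : ∀ j : Fin n, ((bipJoin n a k).Adj i j ↔ (j:ℕ) < N) := by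
            intro j
            rw [bipJoin_adj_iff n a k N hn2 hN]
            have := j.isLt
            omega
          have hterm : ∀ j : Fin n, (if (bipJoin n a k).Adj i j then (1:ℝ) else 0) * W (j:ℕ)
              = (fun m => (if 0 ≤ m ∧ m < a then al else 0)
                  + (if a ≤ m ∧ m < N then be else 0)) (j:ℕ) := by
            intro j
            have hjlt := j.isLt
            by_cases h : (j:ℕ) < N
            · rw [if_pos ((hAdj j).mpr h), one_mul]
              simp only [hW]
              split_ifs <;> first | ring1 | (exfalso; omega)
            · rw [if_neg (fun hc => h ((hAdj j).mp hc)), zero_mul]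
              simp only []
              split_ifs <;> first | ring1 | (exfalso; omega)
          rw [Finset.sum_congr rfl (fun j _ => hterm j),
            Fin.sum_univ_eq_sum_range (fun m => (if 0 ≤ m ∧ m < a then al else 0)
                  + (if a ≤ m ∧ m < N then be else 0)) n,
            Finset.sum_add_distrib, sum_ind n 0 a (by omega) al,
            sum_ind n a N (by omega) be, c3, c4]
          have hWi : W (i:ℕ) = de := by
            simp only [hW]; rw [if_neg h1, if_neg h2, if_neg h3]
          have hq' := hq
          rw [hDDdef] at hq'
          rw [hWi, hal, hbe, hde, hDDdef]
          linear_combination -hq'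

theorem stmt8 (n s k : ℕ) (hs : 1 ≤ s) (hk : 1 ≤ k)
    (hn : 4 * s + 2 * k + 2 ≤ n) (hneven : Even n) :
    specRad (bipJoin n s k) < specRad (bipJoin n (s - 1) k) := by
  obtain ⟨N, hNdef⟩ : ∃ N, n = 2 * N := by
    obtain ⟨m, hm⟩ := hneven
    exact ⟨m, by omega⟩
  have hN1 : s + k + 2 ≤ N := by omega
  have hN2 : (s - 1) + k + 2 ≤ N := by omega
  have hM : 2 * (s:ℝ) + (k:ℝ) + 1 ≤ (N:ℝ) := by
    have h : 2 * s + k + 1 ≤ N := by omega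
    exact_mod_cast h
  have hS : (1:ℝ) ≤ (s:ℝ) := by exact_mod_cast hs
  have hK : (1:ℝ) ≤ (k:ℝ) := by exact_mod_cast hk
  have hcast : ((s - 1 : ℕ) : ℝ) = (s:ℝ) - 1 := by
    push_cast [hs]
    ring
  -- parameter bounds
  have hb1 : (1:ℝ) ≤ (s:ℝ) + (k:ℝ) + 1 := by linarith
  have hc1 : (1:ℝ) ≤ (N:ℝ) - (s:ℝ) := by linarith
  have hd1 : (1:ℝ) ≤ (N:ℝ) - (s:ℝ) - (k:ℝ) - 1 := by linarith
  have ha2 : (0:ℝ) ≤ (s:ℝ) - 1 := by linarith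
  have hb2 : (1:ℝ) ≤ (s:ℝ) - 1 + (k:ℝ) + 1 := by linarith
  have hc2 : (1:ℝ) ≤ (N:ℝ) - ((s:ℝ) - 1) := by linarith
  have hd2 : (1:ℝ) ≤ (N:ℝ) - ((s:ℝ) - 1) - (k:ℝ) - 1 := by linarith
  set l1 : ℝ := lamRoot (s:ℝ) ((s:ℝ)+(k:ℝ)+1) ((N:ℝ)-(s:ℝ)) ((N:ℝ)-(s:ℝ)-(k:ℝ)-1) with hl1def
  set l2 : ℝ := lamRoot ((s:ℝ)-1) ((s:ℝ)-1+(k:ℝ)+1) ((N:ℝ)-((s:ℝ)-1)) ((N:ℝ)-((s:ℝ)-1)-(k:ℝ)-1)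
    with hl2def
  have hsq1 := lamRoot_sq (s:ℝ) ((s:ℝ)+(k:ℝ)+1) ((N:ℝ)-(s:ℝ)) ((N:ℝ)-(s:ℝ)-(k:ℝ)-1)
    (by linarith) (by linarith) (by linarith) (by linarith)
  have hsq2 := lamRoot_sq ((s:ℝ)-1) ((s:ℝ)-1+(k:ℝ)+1) ((N:ℝ)-((s:ℝ)-1)) ((N:ℝ)-((s:ℝ)-1)-(k:ℝ)-1)
    ha2 (by linarith) (by linarith) (by linarith)
  have hcd1 : ((N:ℝ)-(s:ℝ)) * ((N:ℝ)-(s:ℝ)-(k:ℝ)-1) < l1 :=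
    lamRoot_gt_cd _ _ _ _ hS hb1 hc1 hd1
  have hab1 : (s:ℝ) * ((s:ℝ)+(k:ℝ)+1) < l1 :=
    lamRoot_gt_ab _ _ _ _ (by linarith) hb1 hc1 hd1
  have hab2 : ((s:ℝ)-1) * ((s:ℝ)-1+(k:ℝ)+1) < l2 :=
    lamRoot_gt_ab _ _ _ _ ha2 hb2 hc2 hd2
  have hhalf2 := lamRoot_half ((s:ℝ)-1) ((s:ℝ)-1+(k:ℝ)+1) ((N:ℝ)-((s:ℝ)-1)) ((N:ℝ)-((s:ℝ)-1)-(k:ℝ)-1)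
  have hl1pos : 0 < l1 := by nlinarith [hcd1]
  have hl2pos : 0 < l2 := by
    have h1 : (0:ℝ) ≤ ((s:ℝ)-1) * ((s:ℝ)-1+(k:ℝ)+1) := by nlinarith
    have h2 : (0:ℝ) ≤ ((s:ℝ)-1) * ((N:ℝ)-((s:ℝ)-1)-(k:ℝ)-1) := by nlinarith
    have h3 : (1:ℝ) ≤ ((N:ℝ)-((s:ℝ)-1)) * ((N:ℝ)-((s:ℝ)-1)-(k:ℝ)-1) := by nlinarith
    nlinarith [hhalf2]
  -- compare the two largest roots
  have hl12 : l1 < l2 := by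
    apply lam_lt (s:ℝ) (k:ℝ) (N:ℝ) l1 l2 hS hK hM
    · linear_combination hsq1
    · exact hcd1
    · linear_combination hsq2
    · linarith [hhalf2]
  -- spectral radii
  set r1 : ℝ := Real.sqrt l1 with hr1def
  set r2 : ℝ := Real.sqrt l2 with hr2def
  have hr1pos : 0 < r1 := Real.sqrt_pos.mpr hl1pos
  have hr2pos : 0 < r2 := Real.sqrt_pos.mpr hl2pos
  have hr1sq : r1^2 = l1 := Real.sq_sqrt hl1pos.le
  have hr2sq : r2^2 = l2 := Real.sq_sqrt hl2pos.le
  have hspec1 : specRad (bipJoin n s k) = r1 := by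
    apply bipJoin_specRad n s k N hNdef hN1 r1 hr1pos
    · rw [hr1sq]
      exact hab1
    · linear_combination hsq1 + (r1^2 + l1
        - ((s:ℝ)*((s:ℝ)+(k:ℝ)+1) + (s:ℝ)*((N:ℝ)-(s:ℝ)-(k:ℝ)-1)
          + ((N:ℝ)-(s:ℝ))*((N:ℝ)-(s:ℝ)-(k:ℝ)-1))) * hr1sq
  have hspec2 : specRad (bipJoin n (s-1) k) = r2 := by
    apply bipJoin_specRad n (s-1) k N hNdef hN2 r2 hr2pos
    · rw [hcast, hr2sq]
      exact hab2
    · rw [hcast]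
      linear_combination hsq2 + (r2^2 + l2
        - (((s:ℝ)-1)*((s:ℝ)-1+(k:ℝ)+1) + ((s:ℝ)-1)*((N:ℝ)-((s:ℝ)-1)-(k:ℝ)-1)
          + ((N:ℝ)-((s:ℝ)-1))*((N:ℝ)-((s:ℝ)-1)-(k:ℝ)-1))) * hr2sq
  rw [hspec1, hspec2]
  exact Real.sqrt_lt_sqrt hl1pos.le hl12
end

section
/- If G is a connected graph, then ρ(G) ≤ max over vertices v of sqrt(Σ_{u ∈ N(v)} d(u)), with equality if and only if G is regular or semiregular bipartite. -/
open SimpleGraph Matrix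

open scoped Classical in
/-- `Σ_{u ∈ N(v)} d(u)`, the sum of the degrees of the neighbours of `v`. -/
noncomputable def nbrDegSum {V : Type*} [Fintype V] (G : SimpleGraph V) (v : V) : ℝ :=
  ∑ u : V, if G.Adj v u then ((G.neighborSet u).ncard : ℝ) else 0

set_option linter.unusedSectionVars false
set_option linter.unusedVariables false

section Aux

variable {V : Type*} [Fintype V] [DecidableEq V] (G : SimpleGraph V) [DecidableRel G.Adj]

/-- real degree -/
noncomputable def dd (u : V) : ℝ := ((G.neighborSet u).ncard : ℝ)

lemma dd_eq (u : V) : dd G u = (G.degree u : ℝ) := by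
  unfold dd
  rw [← card_neighborFinset_eq_degree, neighborFinset_def, Set.ncard_eq_toFinset_card']

lemma dd_nonneg (u : V) : 0 ≤ dd G u := Nat.cast_nonneg _

lemma sum_nbr_const (v : V) (c : ℝ) :
    ∑ _k ∈ G.neighborFinset v, c = dd G v * c := by
  rw [Finset.sum_const, dd_eq, ← card_neighborFinset_eq_degree, nsmul_eq_mul]

lemma nds_eq (i : V) : nbrDegSum G i = (G.adjMatrix ℝ *ᵥ dd G) i := by
  rw [nbrDegSum, adjMatrix_mulVec_apply, neighborFinset_eq_filter, Finset.sum_filter]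
  refine Finset.sum_congr rfl fun u _ => ?_
  by_cases h : G.Adj i u <;> simp [h, dd]

lemma nds_nonneg (i : V) : 0 ≤ nbrDegSum G i := by
  rw [nds_eq, adjMatrix_mulVec_apply]
  exact Finset.sum_nonneg fun j _ => dd_nonneg G j

lemma mulVec_mono {x y : V → ℝ} (h : ∀ i, x i ≤ y i) (i : V) :
    (G.adjMatrix ℝ *ᵥ x) i ≤ (G.adjMatrix ℝ *ᵥ y) i := by
  simp only [adjMatrix_mulVec_apply]
  exact Finset.sum_le_sum fun j _ => h j

lemma abs_eig_step {x : V → ℝ} {t : ℝ} (hx : G.adjMatrix ℝ *ᵥ x = t • x) (i : V) :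
    |t| * |x i| ≤ (G.adjMatrix ℝ *ᵥ fun j => |x j|) i := by
  have h1 : (G.adjMatrix ℝ *ᵥ x) i = t * x i := by rw [hx]; rfl
  calc |t| * |x i| = |t * x i| := (abs_mul t (x i)).symm
    _ = |(G.adjMatrix ℝ *ᵥ x) i| := by rw [h1]
    _ = |∑ j ∈ G.neighborFinset i, x j| := by rw [adjMatrix_mulVec_apply]
    _ ≤ ∑ j ∈ G.neighborFinset i, |x j| := Finset.abs_sum_le_sum_abs _ _
    _ = (G.adjMatrix ℝ *ᵥ fun j => |x j|) i := (adjMatrix_mulVec_apply _ _ _).symm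

end Aux

set_option linter.unusedSectionVars false

section Aux2

variable {V : Type*} [Fintype V] [DecidableEq V] (G : SimpleGraph V) [DecidableRel G.Adj]

/-- Two-step chain lemma: at a local maximum of a "subharmonic" nonnegative vector,
equality forces the neighbour-degree-sum to equal `ρ²` and the vector to be constant on
two-step neighbourhoods. -/
lemma key_chain {ρ : ℝ} (hρ : 0 ≤ ρ) {y : V → ℝ} (hy0 : ∀ j, 0 ≤ y j)
    (h1 : ∀ j, ρ * y j ≤ (G.adjMatrix ℝ *ᵥ y) j)
    (hub : ∀ v, nbrDegSum G v ≤ ρ ^ 2)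
    (C : Set V) (hC : ∀ j ∈ C, ∀ k l, G.Adj j k → G.Adj k l → l ∈ C)
    {i : V} (hiC : i ∈ C) (hmax : ∀ k ∈ C, y k ≤ y i) (hpos : 0 < y i) :
    nbrDegSum G i = ρ ^ 2 ∧ ∀ j k, G.Adj i j → G.Adj j k → y k = y i := by
  set A := G.adjMatrix ℝ with hA
  set m := y i with hm
  -- first: ρ² m ≤ (A (A y)) i
  have h2 : ρ ^ 2 * m ≤ (A *ᵥ (A *ᵥ y)) i := by
    calc ρ ^ 2 * m = ρ * (ρ * m) := by ring
      _ ≤ ρ * ((A *ᵥ y) i) := mul_le_mul_of_nonneg_left (h1 i) hρ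
      _ = (A *ᵥ (ρ • y)) i := by rw [mulVec_smul]; rfl
      _ ≤ (A *ᵥ (A *ᵥ y)) i := mulVec_mono G (fun j => h1 j) i
  have h3 : (A *ᵥ (A *ᵥ y)) i = ∑ j ∈ G.neighborFinset i, ∑ k ∈ G.neighborFinset j, y k := by
    rw [adjMatrix_mulVec_apply]
    exact Finset.sum_congr rfl fun j _ => adjMatrix_mulVec_apply _ _ _
  have h4 : ∀ j ∈ G.neighborFinset i, ∑ k ∈ G.neighborFinset j, y k ≤ dd G j * m := by
    intro j hj
    rw [← sum_nbr_const G j m]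
    refine Finset.sum_le_sum fun k hk => ?_
    exact hmax k (hC i hiC j k ((G.mem_neighborFinset i j).1 hj) ((G.mem_neighborFinset j k).1 hk))
  have h5 : ∑ j ∈ G.neighborFinset i, dd G j * m = nbrDegSum G i * m := by
    rw [nds_eq, adjMatrix_mulVec_apply, Finset.sum_mul]
  have h6 : nbrDegSum G i * m ≤ ρ ^ 2 * m := mul_le_mul_of_nonneg_right (hub i) hpos.le
  -- all inequalities are equalities
  have hchain : ∑ j ∈ G.neighborFinset i, ∑ k ∈ G.neighborFinset j, y k
      = ∑ j ∈ G.neighborFinset i, dd G j * m := by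
    refine le_antisymm (Finset.sum_le_sum h4) ?_
    rw [h5]
    calc nbrDegSum G i * m ≤ ρ ^ 2 * m := h6
      _ ≤ (A *ᵥ (A *ᵥ y)) i := h2
      _ = _ := h3
  have hndseq : nbrDegSum G i = ρ ^ 2 := by
    have : nbrDegSum G i * m = ρ ^ 2 * m := by
      refine le_antisymm h6 ?_
      calc ρ ^ 2 * m ≤ (A *ᵥ (A *ᵥ y)) i := h2
        _ = ∑ j ∈ G.neighborFinset i, ∑ k ∈ G.neighborFinset j, y k := h3
        _ = ∑ j ∈ G.neighborFinset i, dd G j * m := hchain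
        _ = nbrDegSum G i * m := h5
    exact mul_right_cancel₀ (ne_of_gt hpos) this
  refine ⟨hndseq, fun j k hij hjk => ?_⟩
  have hj' : j ∈ G.neighborFinset i := (G.mem_neighborFinset i j).2 hij
  have hk' : k ∈ G.neighborFinset j := (G.mem_neighborFinset j k).2 hjk
  have hjeq : ∑ k ∈ G.neighborFinset j, y k = dd G j * m :=
    (Finset.sum_eq_sum_iff_of_le h4).1 hchain j hj'
  have hjeq' : ∑ k ∈ G.neighborFinset j, y k = ∑ _k ∈ G.neighborFinset j, m := by
    rw [hjeq, sum_nbr_const]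
  have hkk : ∀ k ∈ G.neighborFinset j, y k ≤ m := fun k hk =>
    hmax k (hC i hiC j k hij ((G.mem_neighborFinset j k).1 hk))
  exact (Finset.sum_eq_sum_iff_of_le hkk).1 hjeq' k hk'

/-- the "two-step" relation -/
def r2 (G : SimpleGraph V) : V → V → Prop := fun a b => ∃ c, G.Adj a c ∧ G.Adj c b

lemma r2_symm {G : SimpleGraph V} {a b : V} (h : r2 G a b) : r2 G b a := by
  obtain ⟨c, h1, h2⟩ := h; exact ⟨c, h2.symm, h1.symm⟩

lemma rtg_symm {G : SimpleGraph V} {a b : V} (h : Relation.ReflTransGen (r2 G) a b) :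
    Relation.ReflTransGen (r2 G) b a :=
  haveI : Std.Symm (r2 G) := ⟨fun _ _ => r2_symm⟩
  (Relation.ReflTransGen.stdSymm (r := r2 G)).symm _ _ h

lemma even_walk {G : SimpleGraph V} :
    ∀ (n : ℕ) {a b : V} (p : G.Walk a b), p.length = 2 * n → Relation.ReflTransGen (r2 G) a b := by
  intro n
  induction n with
  | zero =>
    intro a b p hp
    cases p with
    | nil => exact Relation.ReflTransGen.refl
    | cons h q => simp [SimpleGraph.Walk.length_cons] at hp
  | succ n ih =>
    intro a b p hp
    cases p with
    | nil => simp at hp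
    | cons h q =>
      cases q with
      | nil => simp [SimpleGraph.Walk.length_cons] at hp; omega
      | cons h' q' =>
        refine Relation.ReflTransGen.head ⟨_, h, h'⟩ (ih q' ?_)
        simp [SimpleGraph.Walk.length_cons] at hp
        omega

lemma walk_of_r2 {G : SimpleGraph V} {a b : V} (h : Relation.ReflTransGen (r2 G) a b) :
    ∃ p : G.Walk a b, ∃ n, p.length = 2 * n := by
  induction h with
  | refl => exact ⟨SimpleGraph.Walk.nil, 0, rfl⟩
  | tail h1 h2 ih =>
    obtain ⟨p, n, hn⟩ := ih
    obtain ⟨c, h3, h4⟩ := h2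
    refine ⟨p.append (SimpleGraph.Walk.cons h3 (SimpleGraph.Walk.cons h4 SimpleGraph.Walk.nil)), n + 1, ?_⟩
    simp [SimpleGraph.Walk.length_append, hn]
    ring

end Aux2

section Main

set_option linter.unusedSectionVars false
set_option maxHeartbeats 1000000

variable {V : Type*} [Fintype V] [DecidableEq V] (G : SimpleGraph V) [DecidableRel G.Adj]

/-- any eigenvalue is at most `R` whenever all `nbrDegSum ≤ R²`. -/
lemma eig_le_s11 {R : ℝ} (hR : 0 ≤ R) (hub : ∀ v, nbrDegSum G v ≤ R ^ 2)
    {t : ℝ} {x : V → ℝ} (hx0 : x ≠ 0) (hx : G.adjMatrix ℝ *ᵥ x = t • x) : t ≤ R := by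
  set A := G.adjMatrix ℝ with hA
  set y : V → ℝ := fun j => |x j| with hy
  have hy0 : ∀ j, 0 ≤ y j := fun j => abs_nonneg _
  have h1 : ∀ j, |t| * y j ≤ (A *ᵥ y) j := fun j => abs_eig_step G hx j
  obtain ⟨j0, hj0⟩ := Function.ne_iff.1 hx0
  have hne : (Finset.univ : Finset V).Nonempty := ⟨j0, Finset.mem_univ _⟩
  obtain ⟨i, -, hi⟩ := Finset.exists_max_image Finset.univ y hne
  have hpos : 0 < y i := lt_of_lt_of_le (abs_pos.2 hj0) (hi j0 (Finset.mem_univ _))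
  have h2 : |t| ^ 2 * y i ≤ (A *ᵥ (A *ᵥ y)) i := by
    calc |t| ^ 2 * y i = |t| * (|t| * y i) := by ring
      _ ≤ |t| * ((A *ᵥ y) i) := mul_le_mul_of_nonneg_left (h1 i) (abs_nonneg t)
      _ = (A *ᵥ (|t| • y)) i := by rw [mulVec_smul]; rfl
      _ ≤ (A *ᵥ (A *ᵥ y)) i := mulVec_mono G (fun j => h1 j) i
  have h3 : (A *ᵥ (A *ᵥ y)) i ≤ nbrDegSum G i * y i := by
    rw [adjMatrix_mulVec_apply]
    have : ∀ j ∈ G.neighborFinset i, (A *ᵥ y) j ≤ dd G j * y i := by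
      intro j hj
      rw [adjMatrix_mulVec_apply, ← sum_nbr_const G j (y i)]
      exact Finset.sum_le_sum fun k _ => hi k (Finset.mem_univ _)
    calc ∑ j ∈ G.neighborFinset i, (A *ᵥ y) j ≤ ∑ j ∈ G.neighborFinset i, dd G j * y i :=
          Finset.sum_le_sum this
      _ = nbrDegSum G i * y i := by rw [nds_eq, adjMatrix_mulVec_apply, Finset.sum_mul]
  have h4 : |t| ^ 2 * y i ≤ R ^ 2 * y i :=
    le_trans (h2.trans h3) (mul_le_mul_of_nonneg_right (hub i) hpos.le)
  have h5 : |t| ^ 2 ≤ R ^ 2 := le_of_mul_le_mul_right h4 hpos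
  nlinarith [le_abs_self t, abs_nonneg t]

end Main

set_option maxHeartbeats 2000000 in
theorem stmt11 {V : Type*} [Fintype V] (G : SimpleGraph V) (hG : G.Connected) :
    specRad G ≤ sSup {x : ℝ | ∃ v : V, x = Real.sqrt (nbrDegSum G v)} ∧
    (specRad G = sSup {x : ℝ | ∃ v : V, x = Real.sqrt (nbrDegSum G v)} ↔
      ((∃ d, ∀ v : V, (G.neighborSet v).ncard = d) ∨
        ∃ X : Set V, (∀ u v, G.Adj u v → (u ∈ X ↔ v ∉ X)) ∧
          ∃ a b, (∀ v ∈ X, (G.neighborSet v).ncard = a) ∧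
            ∀ v ∉ X, (G.neighborSet v).ncard = b)) := by
  letI := Classical.decEq V
  letI := Classical.decRel G.Adj
  haveI : Nonempty V := hG.nonempty
  set A := G.adjMatrix ℝ with hA
  set S := {t : ℝ | ∃ v : V → ℝ, v ≠ 0 ∧ A *ᵥ v = t • v} with hS
  have hspec : specRad G = sSup S := rfl
  set T := {x : ℝ | ∃ v : V, x = Real.sqrt (nbrDegSum G v)} with hT
  -- facts about T
  have hTne : T.Nonempty := ⟨_, Classical.arbitrary V, rfl⟩
  have hTfin : T.Finite := by
    have : T ⊆ Set.range (fun v : V => Real.sqrt (nbrDegSum G v)) := by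
      rintro x ⟨v, rfl⟩; exact ⟨v, rfl⟩
    exact (Set.finite_range _).subset this
  set R := sSup T with hR
  have hmemR : R ∈ T := hTne.csSup_mem hTfin
  have hR0 : 0 ≤ R := by obtain ⟨v, hv⟩ := hmemR; rw [hv]; exact Real.sqrt_nonneg _
  have hle : ∀ v : V, Real.sqrt (nbrDegSum G v) ≤ R :=
    fun v => le_csSup hTfin.bddAbove ⟨v, rfl⟩
  have hub : ∀ v : V, nbrDegSum G v ≤ R ^ 2 := by
    intro v
    have h1 : nbrDegSum G v = (Real.sqrt (nbrDegSum G v)) ^ 2 :=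
      (Real.sq_sqrt (nds_nonneg G v)).symm
    rw [h1]
    exact pow_le_pow_left₀ (Real.sqrt_nonneg _) (hle v) 2
  -- facts about S
  have hSne : S.Nonempty := by
    have hAH : A.IsHermitian := by
      rw [Matrix.IsHermitian, conjTranspose_eq_transpose_of_trivial, transpose_adjMatrix]
    obtain ⟨i⟩ := ‹Nonempty V›
    refine ⟨hAH.eigenvalues i, ⇑(hAH.eigenvectorBasis i), ?_, hAH.mulVec_eigenvectorBasis i⟩
    intro h
    exact hAH.eigenvectorBasis.orthonormal.ne_zero i (by ext j; exact congrFun h j)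
  have hSfin : S.Finite := by
    refine (Module.End.finite_hasEigenvalue (Matrix.mulVecLin A)).subset ?_
    rintro t ⟨v, hv0, hv⟩
    exact Module.End.hasEigenvalue_of_hasEigenvector
      ⟨Module.End.mem_eigenspace_iff.2 (by simpa [Matrix.mulVecLin_apply] using hv), hv0⟩
  have hSbdd : ∀ t ∈ S, t ≤ R := by
    rintro t ⟨x, hx0, hx⟩
    exact eig_le_s11 G hR0 hub hx0 hx
  have part1 : specRad G ≤ R := by
    rw [hspec]; exact Real.sSup_le hSbdd hR0
  refine ⟨part1, ?_⟩
  by_cases hE : ∃ p q, G.Adj p q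
  · obtain ⟨p, q, hpq⟩ := hE
    have hRpos : 0 < R := by
      have h1 : (1 : ℝ) ≤ nbrDegSum G p := by
        rw [nbrDegSum]
        have hq : ∀ u : V, (0:ℝ) ≤ if G.Adj p u then ((G.neighborSet u).ncard : ℝ) else 0 := by
          intro u; split <;> positivity
        have h2 : (1:ℝ) ≤ if G.Adj p q then ((G.neighborSet q).ncard : ℝ) else 0 := by
          rw [if_pos hpq]
          have : 1 ≤ (G.neighborSet q).ncard := by
            rw [Nat.one_le_iff_ne_zero, ← Nat.pos_iff_ne_zero]
            exact (Set.ncard_pos (Set.toFinite _)).2 ⟨p, hpq.symm⟩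
          exact_mod_cast this
        calc (1:ℝ) ≤ _ := h2
          _ ≤ ∑ u : V, if G.Adj p u then ((G.neighborSet u).ncard : ℝ) else 0 :=
            Finset.single_le_sum (fun u _ => hq u) (Finset.mem_univ q)
      have := hle p
      have h3 : (1:ℝ) ≤ Real.sqrt (nbrDegSum G p) := by
        rw [show (1:ℝ) = Real.sqrt 1 by simp]
        exact Real.sqrt_le_sqrt h1
      linarith
    constructor
    · intro heq
      classical
      -- R is attained as an eigenvalue
      have hRmem : R ∈ S := by
        have h1 : sSup S ∈ S := hSne.csSup_mem hSfin
        rwa [← hspec, heq] at h1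
      obtain ⟨x, hx0, hx⟩ := hRmem
      set y : V → ℝ := fun j => |x j| with hy
      have hy0 : ∀ j, 0 ≤ y j := fun j => abs_nonneg _
      have h1 : ∀ j, R * y j ≤ (A *ᵥ y) j := by
        intro j
        have h2 := abs_eig_step G hx j
        rwa [abs_of_nonneg hR0] at h2
      obtain ⟨i₀, -, hi₀⟩ := Finset.exists_max_image Finset.univ y
        ⟨Classical.arbitrary V, Finset.mem_univ _⟩
      set m := y i₀ with hm
      have hmax : ∀ k, y k ≤ m := fun k => hi₀ k (Finset.mem_univ _)
      have hmpos : 0 < m := by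
        obtain ⟨j, hj⟩ := Function.ne_iff.1 hx0
        exact lt_of_lt_of_le (abs_pos.2 hj) (hmax j)
      set P : Set V := {w | Relation.ReflTransGen (r2 G) i₀ w} with hP
      have hi₀P : i₀ ∈ P := Relation.ReflTransGen.refl
      have hyP : ∀ w, Relation.ReflTransGen (r2 G) i₀ w → y w = m := by
        intro w hw
        induction hw with
        | refl => rfl
        | @tail b c hb hbc ih =>
          obtain ⟨e, he1, he2⟩ := hbc
          have hkey := key_chain G hR0 hy0 h1 hub Set.univ
            (fun _ _ _ _ _ _ => Set.mem_univ _) (Set.mem_univ b)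
            (fun k _ => by rw [ih]; exact hmax k) (by rw [ih]; exact hmpos)
          rw [hkey.2 e c he1 he2, ih]
      have hkeyP : ∀ w ∈ P, nbrDegSum G w = R ^ 2 ∧ ∀ j k, G.Adj w j → G.Adj j k → y k = m := by
        intro w hw
        have h := key_chain G hR0 hy0 h1 hub Set.univ (fun _ _ _ _ _ _ => Set.mem_univ _)
          (Set.mem_univ w) (fun k _ => by rw [hyP w hw]; exact hmax k)
          (by rw [hyP w hw]; exact hmpos)
        exact ⟨h.1, fun j k hj hk => by rw [h.2 j k hj hk, hyP w hw]⟩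
      have hstep : ∀ (u w : V), G.Walk u w → (u ∈ P ∨ ∃ z ∈ P, G.Adj z u) →
          (w ∈ P ∨ ∃ z ∈ P, G.Adj z w) := by
        intro u w pw
        induction pw with
        | nil => exact id
        | @cons u' b w' h q ih =>
          intro hu
          refine ih ?_
          rcases hu with hu | ⟨z, hz, hzu⟩
          · exact Or.inr ⟨u', hu, h⟩
          · exact Or.inl (Relation.ReflTransGen.tail hz ⟨u', hzu, h⟩)
      have hcover : ∀ w, w ∈ P ∨ ∃ z ∈ P, G.Adj z w := fun w =>
        (hG.preconnected i₀ w).elim fun pw => hstep i₀ w pw (Or.inl hi₀P)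
      by_cases hPQ : ∃ w ∈ P, ∃ z ∈ P, G.Adj z w
      · -- "non-bipartite" case : everything is in P, graph is regular
        left
        obtain ⟨w1, hw1, z1, hz1, hz1w1⟩ := hPQ
        have hallP : ∀ v, v ∈ P := by
          intro v
          rcases hcover v with h | ⟨u, hu, huv⟩
          · exact h
          · obtain ⟨p1, n1, hn1⟩ := walk_of_r2 (rtg_symm hw1)
            obtain ⟨p2, n2, hn2⟩ := walk_of_r2 hu
            have hrtg : Relation.ReflTransGen (r2 G) z1 v :=
              even_walk (n1 + n2 + 1)
                (SimpleGraph.Walk.cons hz1w1 ((p1.append p2).append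
                  (SimpleGraph.Walk.cons huv SimpleGraph.Walk.nil)))
                (by simp [SimpleGraph.Walk.length_append, hn1, hn2]; omega)
            exact Relation.ReflTransGen.trans hz1 hrtg
        have hddge : ∀ v, R ≤ dd G v := by
          intro v
          have h2 := h1 v
          have h3 : (A *ᵥ y) v = dd G v * m := by
            rw [hA, adjMatrix_mulVec_apply, ← sum_nbr_const G v m]
            exact Finset.sum_congr rfl fun k _ => hyP k (hallP k)
          rw [h3, hyP v (hallP v)] at h2
          exact le_of_mul_le_mul_right h2 hmpos
        have hddle : ∀ v, dd G v ≤ R := by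
          intro v
          have h5 : nbrDegSum G v = R ^ 2 := (hkeyP v (hallP v)).1
          have h6 : dd G v * R ≤ ∑ j ∈ G.neighborFinset v, dd G j := by
            rw [← sum_nbr_const G v R]
            exact Finset.sum_le_sum fun j _ => hddge j
          rw [show ∑ j ∈ G.neighborFinset v, dd G j = nbrDegSum G v by
            rw [nds_eq, adjMatrix_mulVec_apply], h5] at h6
          nlinarith [hRpos]
        have hdd_all : ∀ v, dd G v = R := fun v => le_antisymm (hddle v) (hddge v)
        refine ⟨(G.neighborSet i₀).ncard, fun v => ?_⟩
        have h7 : dd G v = dd G i₀ := by rw [hdd_all, hdd_all]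
        simp only [dd] at h7
        exact_mod_cast h7
      · -- "bipartite" case : semiregular
        right
        push_neg at hPQ
        have biAdj : ∀ u v, G.Adj u v → (u ∈ P ↔ v ∉ P) := by
          intro u v huv
          constructor
          · intro hu hv
            exact hPQ v hv u hu huv
          · intro hv
            by_contra hu
            rcases hcover u with h | ⟨z, hz, hzu⟩
            · exact hu h
            · exact hv (Relation.ReflTransGen.tail hz ⟨u, hzu, huv⟩)
        have hQne : ∃ j', j' ∉ P := by
          by_cases hp : p ∈ P
          · exact ⟨q, (biAdj p q hpq).1 hp⟩
          · exact ⟨p, hp⟩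
        obtain ⟨j1, hj1⟩ := hQne
        have hQfne : (Finset.univ.filter (fun v => v ∉ P)).Nonempty :=
          ⟨j1, by simp [hj1]⟩
        obtain ⟨j, hjmem, hjmax'⟩ := Finset.exists_max_image _ y hQfne
        have hjQ : j ∉ P := by
          have := Finset.mem_filter.1 hjmem
          exact this.2
        set m' := y j with hm'
        have hm'max : ∀ k, k ∉ P → y k ≤ m' := fun k hk =>
          hjmax' k (Finset.mem_filter.2 ⟨Finset.mem_univ _, hk⟩)
        have hm'pos : 0 < m' := by
          have h2 : 0 < (A *ᵥ y) i₀ := lt_of_lt_of_le (mul_pos hRpos hmpos) (h1 i₀)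
          rw [hA, adjMatrix_mulVec_apply] at h2
          have h4 : ∑ k ∈ G.neighborFinset i₀, (0:ℝ) < ∑ k ∈ G.neighborFinset i₀, y k := by
            rw [Finset.sum_const_zero]; exact h2
          obtain ⟨k, hkmem, hk⟩ := Finset.exists_lt_of_sum_lt h4
          refine lt_of_lt_of_le hk (hm'max k ?_)
          exact (biAdj i₀ k ((G.mem_neighborFinset _ _).1 hkmem)).1 hi₀P
        set Qs : Set V := {w | w ∉ P} with hQs
        have hQclose : ∀ j' ∈ Qs, ∀ k l, G.Adj j' k → G.Adj k l → l ∈ Qs := by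
          intro j' hj' k l h2 h3
          have hkP : k ∈ P := by
            by_contra hk
            exact hj' ((biAdj j' k h2).2 hk)
          exact (biAdj k l h3).1 hkP
        have hyQ : ∀ w, Relation.ReflTransGen (r2 G) j w → w ∈ Qs ∧ y w = m' := by
          intro w hw
          induction hw with
          | refl => exact ⟨hjQ, rfl⟩
          | @tail b c hb hbc ih =>
            obtain ⟨e, he1, he2⟩ := hbc
            have hcQ : c ∈ Qs := hQclose b ih.1 e c he1 he2
            have hkey := key_chain G hR0 hy0 h1 hub Qs hQclose ih.1
              (fun k hk => by rw [ih.2]; exact hm'max k hk)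
              (by rw [ih.2]; exact hm'pos)
            exact ⟨hcQ, by rw [hkey.2 e c he1 he2, ih.2]⟩
        have hreach : ∀ w, w ∉ P → Relation.ReflTransGen (r2 G) j w := by
          intro w hw
          obtain ⟨uj, huj, hujj⟩ := (hcover j).resolve_left hjQ
          obtain ⟨uw, huw, huww⟩ := (hcover w).resolve_left hw
          obtain ⟨p1, n1, hn1⟩ := walk_of_r2 (rtg_symm huj)
          obtain ⟨p2, n2, hn2⟩ := walk_of_r2 huw
          exact even_walk (n1 + n2 + 1)
            (SimpleGraph.Walk.cons hujj.symm ((p1.append p2).append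
              (SimpleGraph.Walk.cons huww SimpleGraph.Walk.nil)))
            (by simp [SimpleGraph.Walk.length_append, hn1, hn2]; omega)
        have hyQs : ∀ w, w ∉ P → y w = m' := fun w hw => (hyQ w (hreach w hw)).2
        have hndsQ : ∀ w, w ∉ P → nbrDegSum G w = R ^ 2 := by
          intro w hw
          exact (key_chain G hR0 hy0 h1 hub Qs hQclose (hw : w ∈ Qs)
            (fun k hk => by rw [hyQs w hw]; exact hm'max k hk)
            (by rw [hyQs w hw]; exact hm'pos)).1
        have hAyP : ∀ u ∈ P, (A *ᵥ y) u = dd G u * m' := by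
          intro u hu
          rw [hA, adjMatrix_mulVec_apply, ← sum_nbr_const G u m']
          refine Finset.sum_congr rfl fun k hk => ?_
          exact hyQs k ((biAdj u k ((G.mem_neighborFinset _ _).1 hk)).1 hu)
        have hAyQ : ∀ w, w ∉ P → (A *ᵥ y) w = dd G w * m := by
          intro w hw
          rw [hA, adjMatrix_mulVec_apply, ← sum_nbr_const G w m]
          refine Finset.sum_congr rfl fun k hk => ?_
          have hkP : k ∈ P := by
            by_contra hk2
            exact hw ((biAdj w k ((G.mem_neighborFinset _ _).1 hk)).2 hk2)
          exact hyP k hkP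
        have hP_ineq : ∀ u ∈ P, R * m ≤ dd G u * m' := by
          intro u hu
          have h2 := h1 u
          rw [hyP u hu, hAyP u hu] at h2
          exact h2
        have hQ_ineq : ∀ w, w ∉ P → R * m' ≤ dd G w * m := by
          intro w hw
          have h2 := h1 w
          rw [hyQs w hw, hAyQ w hw] at h2
          exact h2
        have hQconst : ∀ w, w ∉ P → dd G w * m = R * m' := by
          intro w hw
          refine le_antisymm ?_ (hQ_ineq w hw)
          have h5 : nbrDegSum G w = R ^ 2 := hndsQ w hw
          have h6 : dd G w * (R * m) ≤ (∑ u ∈ G.neighborFinset w, dd G u) * m' := by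
            rw [Finset.sum_mul, ← sum_nbr_const G w (R * m)]
            refine Finset.sum_le_sum fun u hu => ?_
            have huP : u ∈ P := by
              by_contra hu2
              exact hw ((biAdj w u ((G.mem_neighborFinset _ _).1 hu)).2 hu2)
            exact hP_ineq u huP
          rw [show (∑ u ∈ G.neighborFinset w, dd G u) = nbrDegSum G w by
            rw [nds_eq, adjMatrix_mulVec_apply], h5] at h6
          have h7 := hQ_ineq w hw
          nlinarith [hRpos, hmpos, hm'pos]
        have hPconst : ∀ u ∈ P, dd G u * m' = R * m := by
          intro u hu
          refine le_antisymm ?_ (hP_ineq u hu)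
          have h5 : nbrDegSum G u = R ^ 2 := (hkeyP u hu).1
          have h6 : dd G u * (R * m') ≤ (∑ k ∈ G.neighborFinset u, dd G k) * m := by
            rw [Finset.sum_mul, ← sum_nbr_const G u (R * m')]
            refine Finset.sum_le_sum fun k hk => ?_
            have hkQ : k ∉ P := (biAdj u k ((G.mem_neighborFinset _ _).1 hk)).1 hu
            exact hQ_ineq k hkQ
          rw [show (∑ k ∈ G.neighborFinset u, dd G k) = nbrDegSum G u by
            rw [nds_eq, adjMatrix_mulVec_apply], h5] at h6
          have h7 := hP_ineq u hu
          nlinarith [hRpos, hmpos, hm'pos]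
        refine ⟨P, biAdj, (G.neighborSet i₀).ncard, (G.neighborSet j).ncard, ?_, ?_⟩
        · intro v hv
          have h8 : dd G v * m' = dd G i₀ * m' := by rw [hPconst v hv, hPconst i₀ hi₀P]
          have h9 : dd G v = dd G i₀ := mul_right_cancel₀ (ne_of_gt hm'pos) h8
          simp only [dd] at h9
          exact_mod_cast h9
        · intro v hv
          have h8 : dd G v * m = dd G j * m := by rw [hQconst v hv, hQconst j hjQ]
          have h9 : dd G v = dd G j := mul_right_cancel₀ (ne_of_gt hmpos) h8
          simp only [dd] at h9
          exact_mod_cast h9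
    · -- regular or semiregular implies equality
      intro hreg
      have hRS : R ∈ S → specRad G = R := by
        intro hRS
        refine le_antisymm part1 ?_
        rw [hspec]
        exact le_csSup ⟨R, hSbdd⟩ hRS
      rcases hreg with ⟨d, hd⟩ | ⟨X, hX, a, b, ha, hb⟩
      · -- regular
        have hdd : ∀ v, dd G v = (d : ℝ) := fun v => by rw [dd, hd]
        have hnds : ∀ v : V, nbrDegSum G v = (d : ℝ) * d := by
          intro v
          rw [nds_eq, adjMatrix_mulVec_apply]
          have h1 : ∀ j ∈ G.neighborFinset v, dd G j = (d:ℝ) := fun j _ => hdd j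
          have h2 : ((G.neighborFinset v).card : ℝ) = (d : ℝ) := by
            rw [card_neighborFinset_eq_degree, ← dd_eq, hdd]
          rw [Finset.sum_congr rfl h1, Finset.sum_const, nsmul_eq_mul, h2]
        have hReq : R = (d : ℝ) := by
          obtain ⟨v, hv⟩ := hmemR
          rw [hv, hnds, Real.sqrt_mul_self (by positivity)]
        have : (d : ℝ) ∈ S := by
          refine ⟨fun _ => 1, ?_, ?_⟩
          · intro h
            have := congrFun h (Classical.arbitrary V)
            simp at this
          · ext v
            rw [hA, adjMatrix_mulVec_apply]
            simp only [Finset.sum_const, nsmul_eq_mul, mul_one, Pi.smul_apply, smul_eq_mul]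
            rw [card_neighborFinset_eq_degree]
            have := hdd v
            rw [dd_eq] at this
            rw [this]
        exact hRS (by rw [hReq]; exact this)
      · -- semiregular bipartite
        classical
        have hXQ : ∀ u v, G.Adj u v → u ∈ X → v ∉ X := fun u v h hu => (hX u v h).1 hu
        have hQX : ∀ u v, G.Adj u v → u ∉ X → v ∈ X := by
          intro u v h hu
          exact (hX v u h.symm).2 hu
        have hddX : ∀ v ∈ X, dd G v = (a : ℝ) := fun v hv => by rw [dd, ha v hv]
        have hddQ : ∀ v, v ∉ X → dd G v = (b : ℝ) := fun v hv => by rw [dd, hb v hv]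
        have hnds : ∀ v : V, nbrDegSum G v = (a : ℝ) * b := by
          intro v
          rw [nds_eq, adjMatrix_mulVec_apply]
          by_cases hv : v ∈ X
          · have : ∀ j ∈ G.neighborFinset v, dd G j = (b:ℝ) := by
              intro j hj
              exact hddQ j (hXQ v j ((G.mem_neighborFinset v j).1 hj) hv)
            rw [Finset.sum_congr rfl this, Finset.sum_const, nsmul_eq_mul]
            have h2 : ((G.neighborFinset v).card : ℝ) = (a : ℝ) := by
              rw [card_neighborFinset_eq_degree, ← dd_eq, hddX v hv]
            rw [h2]
          · have : ∀ j ∈ G.neighborFinset v, dd G j = (a:ℝ) := by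
              intro j hj
              exact hddX j (hQX v j ((G.mem_neighborFinset v j).1 hj) hv)
            rw [Finset.sum_congr rfl this, Finset.sum_const, nsmul_eq_mul]
            have h2 : ((G.neighborFinset v).card : ℝ) = (b : ℝ) := by
              rw [card_neighborFinset_eq_degree, ← dd_eq, hddQ v hv]
            rw [h2]; ring
        have hReq : R = Real.sqrt ((a:ℝ) * b) := by
          obtain ⟨v, hv⟩ := hmemR
          rw [hv, hnds]
        -- the eigenvector
        have hx0X : ∃ x₀ ∈ X, ∃ y₀ ∉ X, G.Adj x₀ y₀ := by
          by_cases hp : p ∈ X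
          · exact ⟨p, hp, q, hXQ p q hpq hp, hpq⟩
          · exact ⟨q, hQX p q hpq hp, p, hp, hpq.symm⟩
        obtain ⟨x₀, hx₀, y₀, hy₀, hadj⟩ := hx0X
        have ha1 : 1 ≤ a := by
          rw [← ha x₀ hx₀, Nat.one_le_iff_ne_zero, ← Nat.pos_iff_ne_zero]
          exact (Set.ncard_pos (Set.toFinite _)).2 ⟨y₀, hadj⟩
        have hb1 : 1 ≤ b := by
          rw [← hb y₀ hy₀, Nat.one_le_iff_ne_zero, ← Nat.pos_iff_ne_zero]
          exact (Set.ncard_pos (Set.toFinite _)).2 ⟨x₀, hadj.symm⟩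
        set w : V → ℝ := fun v => if v ∈ X then Real.sqrt a else Real.sqrt b with hw
        have hsab : Real.sqrt ((a:ℝ)*b) = Real.sqrt a * Real.sqrt b :=
          Real.sqrt_mul (by positivity) _
        have hwS : Real.sqrt ((a:ℝ) * b) ∈ S := by
          refine ⟨w, ?_, ?_⟩
          · intro h
            have := congrFun h x₀
            rw [hw] at this
            simp only [if_pos hx₀, Pi.zero_apply] at this
            have : (a : ℝ) = 0 := by
              have := congrArg (fun z => z * Real.sqrt a) this
              simpa [Real.mul_self_sqrt (by positivity : (0:ℝ) ≤ (a:ℝ))] using this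
            have : a = 0 := by exact_mod_cast this
            omega
          · ext v
            rw [hA, adjMatrix_mulVec_apply]
            by_cases hv : v ∈ X
            · have h1 : ∀ j ∈ G.neighborFinset v, w j = Real.sqrt b := by
                intro j hj
                rw [hw]
                simp only [if_neg (hXQ v j ((G.mem_neighborFinset v j).1 hj) hv)]
              rw [Finset.sum_congr rfl h1, Finset.sum_const, nsmul_eq_mul]
              have h2 : ((G.neighborFinset v).card : ℝ) = (a : ℝ) := by
                rw [card_neighborFinset_eq_degree, ← dd_eq, hddX v hv]
              rw [h2]
              simp only [Pi.smul_apply, hw, if_pos hv, smul_eq_mul, hsab]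
              rw [show Real.sqrt a * Real.sqrt b * Real.sqrt a
                  = (Real.sqrt a * Real.sqrt a) * Real.sqrt b by ring,
                Real.mul_self_sqrt (by positivity : (0:ℝ) ≤ (a:ℝ))]
            · have h1 : ∀ j ∈ G.neighborFinset v, w j = Real.sqrt a := by
                intro j hj
                rw [hw]
                simp only [if_pos (hQX v j ((G.mem_neighborFinset v j).1 hj) hv)]
              rw [Finset.sum_congr rfl h1, Finset.sum_const, nsmul_eq_mul]
              have h2 : ((G.neighborFinset v).card : ℝ) = (b : ℝ) := by
                rw [card_neighborFinset_eq_degree, ← dd_eq, hddQ v hv]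
              rw [h2]
              simp only [Pi.smul_apply, hw, if_neg hv, smul_eq_mul, hsab]
              rw [show Real.sqrt a * Real.sqrt b * Real.sqrt b
                  = (Real.sqrt b * Real.sqrt b) * Real.sqrt a by ring,
                Real.mul_self_sqrt (by positivity : (0:ℝ) ≤ (b:ℝ))]
        exact hRS (by rw [hReq]; exact hwS)
  · -- no edges
    push_neg at hE
    have hdeg0 : ∀ v : V, (G.neighborSet v).ncard = 0 := by
      intro v
      rw [Set.ncard_eq_zero (Set.toFinite _)]
      ext u; simp [hE v u]
    have hnds0 : ∀ v : V, nbrDegSum G v = 0 := by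
      intro v
      rw [nbrDegSum]
      refine Finset.sum_eq_zero fun u _ => ?_
      simp [hE v u]
    have hReq : R = 0 := by
      obtain ⟨v, hv⟩ := hmemR
      rw [hv, hnds0, Real.sqrt_zero]
    have hA0 : A = 0 := by
      ext i j
      rw [hA]
      simp [hE i j]
    have hS0 : specRad G = 0 := by
      rw [hspec]
      have : S = {0} := by
        ext t
        constructor
        · rintro ⟨v, hv0, hv⟩
          rw [hA0] at hv
          obtain ⟨j, hj⟩ := Function.ne_iff.1 hv0
          have := congrFun hv.symm j
          simp only [Pi.smul_apply, smul_eq_mul, Matrix.zero_mulVec, Pi.zero_apply] at this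
          rcases mul_eq_zero.1 this with h | h
          · simp [h]
          · exact absurd h hj
        · rintro rfl
          refine ⟨fun _ => 1, ?_, by simp [hA0]⟩
          intro h
          have := congrFun h (Classical.arbitrary V)
          simp at this
      rw [this, csSup_singleton]
    refine iff_of_true ?_ (Or.inl ⟨0, hdeg0⟩)
    rw [hS0, hReq]
end

section
/- If G is a bipartite graph with m ≥ 1 edges and n vertices, then ρ(G) ≤ √m, with equality if and only if G is isomorphic to K_{p,q} ∪ (n−p−q)K₁ where pq = m. -/
open SimpleGraph Matrix

/-- The graph `K_{p,q} ∪ (n-p-q) K₁` on `Fin n`: a complete bipartite graph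
with parts `[0, p)` and `[p, p+q)`, together with `n - p - q` isolated
vertices. -/
def KpqPlusIsolated (n p q : ℕ) : SimpleGraph (Fin n) :=
  SimpleGraph.fromRel (fun x y => x.val < p ∧ p ≤ y.val ∧ y.val < p + q)

set_option linter.unusedSectionVars false
set_option linter.unusedVariables false
set_option linter.unreachableTactic false
set_option linter.unusedTactic false

lemma specRad_def {V : Type*} [Fintype V] (G : SimpleGraph V) [inst : DecidableRel G.Adj] :
    specRad G = sSup {t : ℝ | ∃ v : V → ℝ, v ≠ 0 ∧ G.adjMatrix ℝ *ᵥ v = t • v} := by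
  unfold specRad
  congr!

section Helpers
variable {V : Type*} [Fintype V] [DecidableEq V]

theorem adj_isHermitian (G : SimpleGraph V) [DecidableRel G.Adj] :
    (G.adjMatrix ℝ).IsHermitian := by
  rw [Matrix.IsHermitian, conjTranspose_eq_transpose_of_trivial]
  exact G.isSymm_adjMatrix

theorem eigSet_eq_range {A : Matrix V V ℝ} (hA : A.IsHermitian) :
    {t : ℝ | ∃ v : V → ℝ, v ≠ 0 ∧ A *ᵥ v = t • v} = Set.range hA.eigenvalues := by
  ext t
  constructor
  · rintro ⟨v, hv0, hv⟩
    have h1 : Module.End.HasEigenvalue (Matrix.toLin' A) t := by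
      apply Module.End.hasEigenvalue_of_hasEigenvector (x := v)
      refine ⟨Module.End.mem_eigenspace_iff.2 ?_, hv0⟩
      simpa [Matrix.toLin'_apply] using hv
    have h2 : t ∈ spectrum ℝ A := by
      have h3 := h1.mem_spectrum
      rwa [← AlgEquiv.spectrum_eq (Matrix.toLinAlgEquiv (Pi.basisFun ℝ V)) A]
    rwa [hA.spectrum_real_eq_range_eigenvalues] at h2
  · rintro ⟨i, rfl⟩
    refine ⟨⇑(hA.eigenvectorBasis i), ?_, hA.mulVec_eigenvectorBasis i⟩
    have h := hA.eigenvectorBasis.toBasis.ne_zero i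
    intro h'
    exact h (by simpa using h')

theorem sum_sq_eigenvalues {A : Matrix V V ℝ} (hA : A.IsHermitian) :
    ∑ i, hA.eigenvalues i ^ 2 = Matrix.trace (A * A) := by
  conv_rhs => rw [hA.spectral_theorem]
  simp only [Unitary.conjStarAlgAut_apply, Unitary.coe_star]
  set U := (hA.eigenvectorUnitary : Matrix V V ℝ) with hU
  set D := (Matrix.diagonal (RCLike.ofReal ∘ hA.eigenvalues) : Matrix V V ℝ) with hD
  have hsU : star U * U = 1 := (Unitary.mem_iff.mp hA.eigenvectorUnitary.2).1
  have h2 : (U * D * star U) * (U * D * star U) = U * (D * D) * star U := by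
    simp only [Matrix.mul_assoc]
    rw [← Matrix.mul_assoc (star U) U, hsU, Matrix.one_mul]
  rw [h2, Matrix.trace_mul_cycle, ← Matrix.mul_assoc, hsU, Matrix.one_mul]
  rw [hD, Matrix.diagonal_mul_diagonal, Matrix.trace_diagonal]
  simp [sq]

theorem trace_adj_sq (G : SimpleGraph V) [DecidableRel G.Adj] :
    Matrix.trace (G.adjMatrix ℝ * G.adjMatrix ℝ) = 2 * G.edgeFinset.card := by
  have key : ∀ u, (G.adjMatrix ℝ * G.adjMatrix ℝ) u u = (G.degree u : ℝ) := by
    intro u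
    rw [Matrix.mul_apply]
    have h1 : ∀ j, G.adjMatrix ℝ u j * G.adjMatrix ℝ j u
        = if j ∈ G.neighborFinset u then (1:ℝ) else 0 := by
      intro j
      by_cases h : G.Adj u j
      · simp [h, h.symm]
      · simp [h]
    rw [Finset.sum_congr rfl fun j _ => h1 j, Finset.sum_boole]
    simp [SimpleGraph.degree, SimpleGraph.neighborFinset_eq_filter, Finset.filter_univ_mem]
  rw [Matrix.trace]
  simp only [Matrix.diag_apply, key]
  rw [← Nat.cast_sum, SimpleGraph.sum_degrees_eq_twice_card_edges]
  push_cast; ring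

lemma neg_eig (G : SimpleGraph V) [DecidableRel G.Adj] {X : Set V}
    (hX : ∀ u v, G.Adj u v → (u ∈ X ↔ v ∉ X)) {t : ℝ} {v : V → ℝ} (hv0 : v ≠ 0)
    (hv : G.adjMatrix ℝ *ᵥ v = t • v) :
    ∃ w : V → ℝ, w ≠ 0 ∧ G.adjMatrix ℝ *ᵥ w = (-t) • w := by
  classical
  set w : V → ℝ := fun u => if u ∈ X then v u else -v u with hw
  have hw0 : w ≠ 0 := by
    intro h
    apply hv0
    funext u
    have := congrFun h u
    simp only [hw, Pi.zero_apply] at this ⊢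
    by_cases hu : u ∈ X <;> simp [hu] at this <;> simp [this]
  refine ⟨w, hw0, ?_⟩
  funext u
  have hterm : ∀ x, G.adjMatrix ℝ u x * w x
      = (if u ∈ X then (-1:ℝ) else 1) * (G.adjMatrix ℝ u x * v x) := by
    intro x
    by_cases hadj : G.Adj u x
    · have hux := hX u x hadj
      by_cases hu : u ∈ X
      · have hx : x ∉ X := hux.1 hu
        simp [hw, hadj, hu, hx]
      · have hx : x ∈ X := by by_contra hx; exact hu (hux.2 hx)
        simp [hw, hadj, hu, hx]
    · simp [SimpleGraph.adjMatrix_apply, hadj]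
  have hsum : (G.adjMatrix ℝ *ᵥ w) u
      = (if u ∈ X then (-1:ℝ) else 1) * (G.adjMatrix ℝ *ᵥ v) u := by
    rw [Matrix.mulVec, dotProduct, Finset.sum_congr rfl fun x _ => hterm x,
      ← Finset.mul_sum]
    rfl
  rw [hsum, hv]
  simp only [Pi.smul_apply, smul_eq_mul, hw]
  by_cases hu : u ∈ X <;> simp [hu] <;> ring

-- the core spectral lemma
theorem spec_core (G : SimpleGraph V) [DecidableRel G.Adj] {m : ℕ}
    (hbip : ∃ X : Set V, ∀ u v, G.Adj u v → (u ∈ X ↔ v ∉ X))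
    (hm : G.edgeFinset.card = m) (hm1 : 1 ≤ m) :
    sSup {t : ℝ | ∃ v : V → ℝ, v ≠ 0 ∧ G.adjMatrix ℝ *ᵥ v = t • v} ≤ Real.sqrt m ∧
    (sSup {t : ℝ | ∃ v : V → ℝ, v ≠ 0 ∧ G.adjMatrix ℝ *ᵥ v = t • v} = Real.sqrt m →
      (G.adjMatrix ℝ).rank ≤ 2) := by
  classical
  obtain ⟨X, hX⟩ := hbip
  -- get an edge
  have hne : G.edgeFinset.Nonempty := Finset.card_pos.mp (hm ▸ hm1)
  obtain ⟨e, he⟩ := hne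
  have hadj : ∃ a b : V, G.Adj a b := by
    induction e using Sym2.ind with
    | _ a b => exact ⟨a, b, (SimpleGraph.mem_edgeFinset.mp he)⟩
  obtain ⟨a, b, hab⟩ := hadj
  haveI : Nonempty V := ⟨a⟩
  set A := G.adjMatrix ℝ with hA
  have hH : A.IsHermitian := adj_isHermitian G
  set μ := hH.eigenvalues with hμ
  set S := {t : ℝ | ∃ v : V → ℝ, v ≠ 0 ∧ A *ᵥ v = t • v} with hS
  have hrange : S = Set.range μ := eigSet_eq_range hH
  obtain ⟨i0, hi0⟩ := Finite.exists_max μ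
  have hbdd : BddAbove S := by rw [hrange]; exact (Set.finite_range μ).bddAbove
  have hSne : S.Nonempty := by rw [hrange]; exact ⟨μ i0, i0, rfl⟩
  have hsup : sSup S = μ i0 := by
    apply le_antisymm
    · apply csSup_le hSne
      intro t ht
      rw [hrange] at ht
      obtain ⟨i, rfl⟩ := ht
      exact hi0 i
    · exact le_csSup hbdd (by rw [hrange]; exact ⟨i0, rfl⟩)
  have htr : ∑ i, μ i ^ 2 = 2 * (m : ℝ) := by
    rw [sum_sq_eigenvalues hH, trace_adj_sq G, hm]
  have hm0 : (0:ℝ) ≤ m := Nat.cast_nonneg m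
  have hsqrt1 : (1:ℝ) ≤ Real.sqrt m := by
    rw [show (1:ℝ) = Real.sqrt 1 by simp]
    exact Real.sqrt_le_sqrt (by exact_mod_cast hm1)
  by_cases hpos : 0 < μ i0
  · -- positive top eigenvalue
    have hlam : μ i0 ∈ S := by rw [hrange]; exact ⟨i0, rfl⟩
    obtain ⟨v, hv0, hv⟩ := hlam
    obtain ⟨w, hw0, hw⟩ := neg_eig G hX hv0 hv
    have hnegmem : -μ i0 ∈ S := ⟨w, hw0, hw⟩
    rw [hrange] at hnegmem
    obtain ⟨j, hj⟩ := hnegmem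
    have hij : i0 ≠ j := by
      intro h
      rw [← h] at hj
      linarith
    have hpair : ∑ k ∈ ({i0, j} : Finset V), μ k ^ 2 = 2 * μ i0 ^ 2 := by
      rw [Finset.sum_pair hij, hj]
      ring
    have hle : ∑ k ∈ ({i0, j} : Finset V), μ k ^ 2 ≤ ∑ k, μ k ^ 2 :=
      Finset.sum_le_sum_of_subset_of_nonneg (Finset.subset_univ _)
        (fun k _ _ => sq_nonneg _)
    have hsq : μ i0 ^ 2 ≤ m := by
      rw [hpair] at hle
      rw [htr] at hle
      linarith
    have hineq : μ i0 ≤ Real.sqrt m := (Real.le_sqrt hpos.le hm0).mpr hsq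
    refine ⟨by rw [hsup]; exact hineq, ?_⟩
    intro heq
    rw [hsup] at heq
    have hsqeq : μ i0 ^ 2 = m := by
      rw [heq, Real.sq_sqrt hm0]
    -- all other eigenvalues vanish
    have hzero : ∀ k, k ∉ ({i0, j} : Finset V) → μ k = 0 := by
      have hsplit : ∑ k, μ k ^ 2
          = ∑ k ∈ ({i0, j} : Finset V), μ k ^ 2
            + ∑ k ∈ ({i0, j} : Finset V)ᶜ, μ k ^ 2 := by
        rw [Finset.sum_add_sum_compl]
      have hrest : ∑ k ∈ ({i0, j} : Finset V)ᶜ, μ k ^ 2 = 0 := by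
        rw [hsplit, hpair, hsqeq] at htr
        linarith
      intro k hk
      have := (Finset.sum_eq_zero_iff_of_nonneg
        (fun k _ => sq_nonneg (μ k))).mp hrest k (Finset.mem_compl.mpr hk)
      exact pow_eq_zero_iff (two_ne_zero) |>.mp this
    rw [hH.rank_eq_card_non_zero_eigs]
    have hsub : Finset.univ.filter (fun k => hH.eigenvalues k ≠ 0) ⊆ {i0, j} := by
      intro k hk
      rw [Finset.mem_filter] at hk
      by_contra hkn
      exact hk.2 (hzero k hkn)
    calc Fintype.card {i // hH.eigenvalues i ≠ 0}
        = (Finset.univ.filter (fun k => hH.eigenvalues k ≠ 0)).card := Fintype.card_subtype _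
      _ ≤ ({i0, j} : Finset V).card := Finset.card_le_card hsub
      _ ≤ 2 := Finset.card_insert_le _ _ |>.trans (by simp)
  · -- nonpositive top eigenvalue
    push_neg at hpos
    constructor
    · rw [hsup]
      exact le_trans hpos (by linarith)
    · intro heq
      rw [hsup] at heq
      exfalso
      rw [heq] at hpos
      linarith

lemma structure_of_rank_le_two (G : SimpleGraph V) [DecidableRel G.Adj]
    (hrank : (G.adjMatrix ℝ).rank ≤ 2) {u v : V} (huv : G.Adj u v) :
    ∀ a b, G.Adj a b ↔ ((G.Adj a v ∧ G.Adj b u) ∨ (G.Adj a u ∧ G.Adj b v)) := by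
  classical
  set A := G.adjMatrix ℝ with hA
  set row : V → (V → ℝ) := fun w x => A w x with hrow
  have hrow_mem : ∀ w, row w ∈ LinearMap.range A.mulVecLin := by
    intro w
    refine ⟨Pi.single w 1, ?_⟩
    rw [Matrix.mulVecLin_apply, Matrix.mulVec_single]
    funext x
    simp [hrow, hA, SimpleGraph.adjMatrix_apply, G.adj_comm]
  have hindep : LinearIndependent ℝ ![row u, row v] := by
    rw [LinearIndependent.pair_iff]
    intro s t hst
    have h1 := congrFun hst v
    have h2 := congrFun hst u
    simp [hrow, hA, SimpleGraph.adjMatrix_apply, huv, huv.symm, G.ne_of_adj huv,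
      (G.ne_of_adj huv).symm] at h1 h2
    exact ⟨h1, h2⟩
  have hspan : Submodule.span ℝ {row u, row v} = LinearMap.range A.mulVecLin := by
    apply Submodule.eq_of_le_of_finrank_le
    · rw [Submodule.span_le]
      rintro x (rfl | rfl)
      · exact hrow_mem u
      · exact hrow_mem v
    · have h2 : Set.range ![row u, row v] = {row u, row v} := by
        ext x
        simp [Fin.exists_fin_two]
        tauto
      have h1 : Module.finrank ℝ (Submodule.span ℝ ({row u, row v} : Set (V → ℝ))) = 2 := by
        rw [← h2, finrank_span_eq_card hindep]
        simp
      rw [h1]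
      exact le_trans (by exact_mod_cast le_rfl : Module.finrank ℝ (LinearMap.range A.mulVecLin) ≤ A.rank) hrank
  have hcomb : ∀ w x, A w x = A w v * A u x + A w u * A v x := by
    intro w x
    have hmem : row w ∈ Submodule.span ℝ ({row u, row v} : Set (V → ℝ)) := by
      rw [hspan]; exact hrow_mem w
    obtain ⟨a, b, hab⟩ := Submodule.mem_span_pair.mp hmem
    have hav := congrFun hab v
    have hau := congrFun hab u
    have hax := congrFun hab x
    simp only [Pi.add_apply, Pi.smul_apply, smul_eq_mul, hrow] at hav hau hax
    have e1 : A u v = 1 := by simp [hA, huv]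
    have e2 : A v u = 1 := by simp [hA, huv.symm]
    have e3 : A v v = 0 := by simp [hA]
    have e4 : A u u = 0 := by simp [hA]
    rw [e1, e3, mul_one, mul_zero, add_zero] at hav
    rw [e2, e4, mul_one, mul_zero, zero_add] at hau
    rw [← hax, hav, hau]
  -- no vertex adjacent to both u and v
  have hdisj : ∀ w, ¬(G.Adj w u ∧ G.Adj w v) := by
    rintro w ⟨h1, h2⟩
    have := hcomb w w
    simp [hA, SimpleGraph.adjMatrix_apply, h1, h2, h1.symm, h2.symm] at this
    norm_num at this
  have ent1 : ∀ x y, G.Adj x y → A x y = 1 := fun x y h => by simp [hA, h]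
  have ent0 : ∀ x y, ¬ G.Adj x y → A x y = 0 := fun x y h => by simp [hA, h]
  intro a b
  constructor
  · intro hab
    have h := hcomb a b
    rw [ent1 a b hab] at h
    by_cases hav : G.Adj a v
    · by_cases hub : G.Adj u b
      · exact Or.inl ⟨hav, hub.symm⟩
      · have hau : ¬ G.Adj a u := fun h' => hdisj a ⟨h', hav⟩
        rw [ent0 u b hub, ent0 a u hau] at h
        norm_num at h
    · by_cases hau : G.Adj a u
      · by_cases hvb : G.Adj v b
        · exact Or.inr ⟨hau, hvb.symm⟩
        · rw [ent0 a v hav, ent0 v b hvb] at h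
          norm_num at h
      · rw [ent0 a v hav, ent0 a u hau] at h
        norm_num at h
  · rintro (⟨h1, h2⟩ | ⟨h1, h2⟩)
    · have h := hcomb a b
      have hau : ¬ G.Adj a u := fun h' => hdisj a ⟨h', h1⟩
      have e : A a b = 1 := by
        rw [h]
        simp [hA, SimpleGraph.adjMatrix_apply, h1, h2.symm, hau]
      by_contra hcon
      simp [hA, SimpleGraph.adjMatrix_apply, hcon] at e
    · have h := hcomb a b
      have hav : ¬ G.Adj a v := fun h' => hdisj a ⟨h1, h'⟩
      have e : A a b = 1 := by
        rw [h]
        simp [hA, SimpleGraph.adjMatrix_apply, h1, h2.symm, hav]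
      by_contra hcon
      simp [hA, SimpleGraph.adjMatrix_apply, hcon] at e

lemma build_iso (G : SimpleGraph V) [DecidableRel G.Adj] {u v : V} (huv : G.Adj u v)
    (hstruct : ∀ a b, G.Adj a b ↔ ((G.Adj a v ∧ G.Adj b u) ∨ (G.Adj a u ∧ G.Adj b v))) :
    ∃ p q, 1 ≤ p ∧ 1 ≤ q ∧ p * q = G.edgeFinset.card ∧ p + q ≤ Fintype.card V ∧
      Nonempty (G ≃g KpqPlusIsolated (Fintype.card V) p q) := by
  classical
  set n := Fintype.card V with hn
  have hdisj : ∀ w, ¬(G.Adj w u ∧ G.Adj w v) := by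
    rintro w ⟨h1, h2⟩
    exact G.loopless.irrefl w ((hstruct w w).mpr (Or.inl ⟨h2, h1⟩))
  set X : Finset V := Finset.univ.filter (fun w => G.Adj w v) with hX
  set Y : Finset V := Finset.univ.filter (fun w => G.Adj w u) with hY
  have hmX : ∀ w, w ∈ X ↔ G.Adj w v := by intro w; simp [hX]
  have hmY : ∀ w, w ∈ Y ↔ G.Adj w u := by intro w; simp [hY]
  have hXY : Disjoint X Y := by
    rw [Finset.disjoint_left]
    intro w hw hw'
    exact hdisj w ⟨(hmY w).mp hw', (hmX w).mp hw⟩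
  have hAdjIff : ∀ a b, G.Adj a b ↔ ((a ∈ X ∧ b ∈ Y) ∨ (a ∈ Y ∧ b ∈ X)) := by
    intro a b
    rw [hstruct a b, hmX, hmY, hmX, hmY]
  have hu : u ∈ X := (hmX u).mpr huv
  have hv : v ∈ Y := (hmY v).mpr huv.symm
  set p := X.card with hp
  set q := Y.card with hq
  have hp1 : 1 ≤ p := Finset.card_pos.mpr ⟨u, hu⟩
  have hq1 : 1 ≤ q := Finset.card_pos.mpr ⟨v, hv⟩
  have hunion : (X ∪ Y).card = p + q := Finset.card_union_of_disjoint hXY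
  have hpqn : p + q ≤ n := by
    rw [← hunion, hn]
    exact Finset.card_le_univ _
  -- degrees
  have hnbrX : ∀ w ∈ X, G.neighborFinset w = Y := by
    intro w hw
    ext x
    rw [SimpleGraph.mem_neighborFinset, hAdjIff]
    have hwY : w ∉ Y := Finset.disjoint_left.mp hXY hw
    constructor
    · rintro (⟨_, h⟩ | ⟨h, _⟩)
      · exact h
      · exact absurd h hwY
    · intro h; exact Or.inl ⟨hw, h⟩
  have hnbrY : ∀ w ∈ Y, G.neighborFinset w = X := by
    intro w hw
    ext x
    rw [SimpleGraph.mem_neighborFinset, hAdjIff]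
    have hwX : w ∉ X := Finset.disjoint_right.mp hXY hw
    constructor
    · rintro (⟨h, _⟩ | ⟨_, h⟩)
      · exact absurd h hwX
      · exact h
    · intro h; exact Or.inr ⟨hw, h⟩
  have hnbr0 : ∀ w, w ∉ X ∪ Y → G.neighborFinset w = ∅ := by
    intro w hw
    rw [Finset.mem_union] at hw
    push_neg at hw
    ext x
    rw [SimpleGraph.mem_neighborFinset, hAdjIff]
    simp only [Finset.notMem_empty, iff_false]
    rintro (⟨h, _⟩ | ⟨h, _⟩)
    · exact hw.1 h
    · exact hw.2 h
  -- edge count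
  have hEdge : p * q = G.edgeFinset.card := by
    have h2 : ∑ w, G.degree w = 2 * G.edgeFinset.card :=
      G.sum_degrees_eq_twice_card_edges
    have h3 : ∑ w, G.degree w = ∑ w ∈ X ∪ Y, G.degree w := by
      symm
      apply Finset.sum_subset (Finset.subset_univ _)
      intro w _ hw
      rw [SimpleGraph.degree, hnbr0 w hw, Finset.card_empty]
    have h4 : ∑ w ∈ X ∪ Y, G.degree w = p * q + q * p := by
      rw [Finset.sum_union hXY]
      have e1 : ∑ w ∈ X, G.degree w = p * q := by
        rw [Finset.sum_congr rfl (fun w hw => by rw [SimpleGraph.degree, hnbrX w hw])]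
        simp [hp, hq, mul_comm]
      have e2 : ∑ w ∈ Y, G.degree w = q * p := by
        rw [Finset.sum_congr rfl (fun w hw => by rw [SimpleGraph.degree, hnbrY w hw])]
        simp [hp, hq, mul_comm]
      rw [e1, e2]
    rw [h3, h4, mul_comm q p] at h2
    omega
  refine ⟨p, q, hp1, hq1, hEdge, hpqn, ?_⟩
  -- build the isomorphism
  set R : Finset V := (X ∪ Y)ᶜ with hR
  set r := R.card with hr
  have hcard : p + q + r = n := by
    have := Finset.card_compl (X ∪ Y) (α := V)
    rw [← hR] at this
    omega
  have e1 : (X : Type _) ≃ Fin p := Fintype.equivFinOfCardEq (Fintype.card_coe X)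
  have e2 : (Y : Type _) ≃ Fin q := Fintype.equivFinOfCardEq (Fintype.card_coe Y)
  have e3 : (R : Type _) ≃ Fin r := Fintype.equivFinOfCardEq (Fintype.card_coe R)
  set g : V → ℕ := fun x =>
    if hx : x ∈ X then (e1 ⟨x, hx⟩).val
    else if hy : x ∈ Y then p + (e2 ⟨x, hy⟩).val
    else p + q + (e3 ⟨x, by rw [hR]; simp [hx, hy]⟩).val with hg
  have hglt : ∀ x, g x < n := by
    intro x
    simp only [hg]
    split_ifs with hx hy
    · exact lt_of_lt_of_le (e1 ⟨x, hx⟩).isLt (by omega)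
    · have := (e2 ⟨x, hy⟩).isLt; omega
    · have := (e3 ⟨x, by rw [hR]; simp [hx, hy]⟩).isLt; omega
  set f : V → Fin n := fun x => ⟨g x, hglt x⟩ with hf
  have hfX : ∀ x, x ∈ X ↔ g x < p := by
    intro x
    constructor
    · intro hx
      simp only [hg]
      simp only [hx, dif_pos]
      exact (e1 ⟨x, hx⟩).isLt
    · intro h
      by_contra hx
      simp only [hg] at h
      simp only [hx, dif_neg, not_false_iff] at h
      split_ifs at h <;> omega
  have hfY : ∀ x, x ∈ Y ↔ (p ≤ g x ∧ g x < p + q) := by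
    intro x
    constructor
    · intro hy
      have hx : x ∉ X := Finset.disjoint_right.mp hXY hy
      simp only [hg]
      simp only [hx, dif_neg, not_false_iff, hy, dif_pos]
      have := (e2 ⟨x, hy⟩).isLt
      omega
    · rintro ⟨h1, h2⟩
      by_contra hy
      simp only [hg] at h1 h2
      split_ifs at h1 h2 with hx
      · omega
      · omega
  have hinj : Function.Injective f := by
    intro a b hab
    have hgab : g a = g b := congrArg Fin.val hab
    by_cases ha : a ∈ X
    · have hb : b ∈ X := by rw [hfX]; rw [← hgab]; exact (hfX a).mp ha
      have h1 : g a = (e1 ⟨a, ha⟩).val := by simp [hg, ha]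
      have h2 : g b = (e1 ⟨b, hb⟩).val := by simp [hg, hb]
      have : e1 ⟨a, ha⟩ = e1 ⟨b, hb⟩ := Fin.ext (by omega)
      exact congrArg Subtype.val (e1.injective this)
    · by_cases ha' : a ∈ Y
      · have hb' : b ∈ Y := by rw [hfY]; rw [← hgab]; exact (hfY a).mp ha'
        have h1 : g a = p + (e2 ⟨a, ha'⟩).val := by simp [hg, ha, ha']
        have hbX : b ∉ X := Finset.disjoint_right.mp hXY hb'
        have h2 : g b = p + (e2 ⟨b, hb'⟩).val := by simp [hg, hbX, hb']
        have : e2 ⟨a, ha'⟩ = e2 ⟨b, hb'⟩ := Fin.ext (by omega)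
        exact congrArg Subtype.val (e2.injective this)
      · have hbX : b ∉ X := by
          intro hb
          have := (hfX b).mp hb
          have := (hfX a).mpr (by omega)
          exact ha this
        have hbY : b ∉ Y := by
          intro hb
          have := (hfY b).mp hb
          have := (hfY a).mpr (by omega)
          exact ha' this
        have h1 : g a = p + q + (e3 ⟨a, by rw [hR]; simp [ha, ha']⟩).val := by
          simp [hg, ha, ha']
        have h2 : g b = p + q + (e3 ⟨b, by rw [hR]; simp [hbX, hbY]⟩).val := by
          simp [hg, hbX, hbY]
        have : e3 ⟨a, by rw [hR]; simp [ha, ha']⟩ = e3 ⟨b, by rw [hR]; simp [hbX, hbY]⟩ :=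
          Fin.ext (by omega)
        exact congrArg Subtype.val (e3.injective this)
  have hbij : Function.Bijective f :=
    (Fintype.bijective_iff_injective_and_card f).mpr ⟨hinj, by simp [hn]⟩
  refine ⟨⟨Equiv.ofBijective f hbij, ?_⟩⟩
  intro a b
  show (KpqPlusIsolated n p q).Adj (f a) (f b) ↔ G.Adj a b
  have hval : ∀ x, (f x).val = g x := fun x => rfl
  rw [KpqPlusIsolated, SimpleGraph.fromRel_adj]
  rw [hval, hval]
  constructor
  · rintro ⟨hne, (⟨h1, h2, h3⟩ | ⟨h1, h2, h3⟩)⟩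
    · exact (hAdjIff a b).mpr (Or.inl ⟨(hfX a).mpr h1, (hfY b).mpr ⟨h2, h3⟩⟩)
    · exact (hAdjIff a b).mpr (Or.inr ⟨(hfY a).mpr ⟨h2, h3⟩, (hfX b).mpr h1⟩)
  · intro hab
    refine ⟨fun h => G.ne_of_adj hab (hinj h), ?_⟩
    rcases (hAdjIff a b).mp hab with ⟨h1, h2⟩ | ⟨h1, h2⟩
    · exact Or.inl ⟨(hfX a).mp h1, ((hfY b).mp h2).1, ((hfY b).mp h2).2⟩
    · exact Or.inr ⟨(hfX b).mp h2, ((hfY a).mp h1).1, ((hfY a).mp h1).2⟩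

end Helpers

lemma eigSet_subset_of_iso {V W : Type*} [Fintype V] [Fintype W]
    {G : SimpleGraph V} {H : SimpleGraph W}
    [DecidableRel G.Adj] [DecidableRel H.Adj] (φ : G ≃g H) {t : ℝ}
    (ht : t ∈ {t : ℝ | ∃ v : W → ℝ, v ≠ 0 ∧ H.adjMatrix ℝ *ᵥ v = t • v}) :
    t ∈ {t : ℝ | ∃ v : V → ℝ, v ≠ 0 ∧ G.adjMatrix ℝ *ᵥ v = t • v} := by
  obtain ⟨w, hw0, hw⟩ := ht
  refine ⟨w ∘ φ, ?_, ?_⟩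
  · intro h
    apply hw0
    funext x
    have := congrFun h (φ.symm x)
    simpa using this
  · funext a
    have key : ∀ b, G.adjMatrix ℝ a b * w (φ b)
        = H.adjMatrix ℝ (φ a) (φ b) * w (φ b) := by
      intro b
      by_cases hadj : G.Adj a b
      · simp [hadj, φ.map_adj_iff.mpr hadj]
      · have : ¬ H.Adj (φ a) (φ b) := fun h => hadj (φ.map_adj_iff.mp h)
        simp [hadj, this]
    have : (G.adjMatrix ℝ *ᵥ (w ∘ φ)) a = (H.adjMatrix ℝ *ᵥ w) (φ a) := by
      simp only [Matrix.mulVec, dotProduct, Function.comp_apply]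
      rw [Finset.sum_congr rfl fun b _ => key b]
      exact Equiv.sum_comp φ.toEquiv (fun b => H.adjMatrix ℝ (φ a) b * w b)
    rw [this, hw]
    simp

lemma kpq_adj {n p q : ℕ} (hpq : p + q ≤ n) (x y : Fin n) :
    (KpqPlusIsolated n p q).Adj x y ↔
      ((x.val < p ∧ p ≤ y.val ∧ y.val < p + q) ∨ (y.val < p ∧ p ≤ x.val ∧ x.val < p + q)) := by
  rw [KpqPlusIsolated, SimpleGraph.fromRel_adj]
  constructor
  · rintro ⟨-, h⟩; exact h
  · intro h
    refine ⟨?_, h⟩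
    rcases h with ⟨h1, h2, h3⟩ | ⟨h1, h2, h3⟩ <;> (rintro rfl; omega)

lemma kpq_bipartite (n p q : ℕ) (hpq : p + q ≤ n) :
    ∃ X : Set (Fin n), ∀ u v, (KpqPlusIsolated n p q).Adj u v → (u ∈ X ↔ v ∉ X) := by
  refine ⟨{x | x.val < p}, ?_⟩
  intro x y hadj
  rw [kpq_adj hpq] at hadj
  simp only [Set.mem_setOf_eq]
  rcases hadj with ⟨h1, h2, h3⟩ | ⟨h1, h2, h3⟩ <;> constructor <;> intro <;> omega

lemma card_filter_Ico {n a b : ℕ} (hb : b ≤ n) (hab : a ≤ b) :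
    (Finset.univ.filter (fun y : Fin n => a ≤ y.val ∧ y.val < b)).card = b - a := by
  rw [← Nat.card_Ico a b]
  apply Finset.card_bij (fun y _ => y.val)
  · intro y hy
    rw [Finset.mem_filter] at hy
    rw [Finset.mem_Ico]
    exact hy.2
  · intro y _ z _ h
    exact Fin.ext h
  · intro c hc
    rw [Finset.mem_Ico] at hc
    exact ⟨⟨c, by omega⟩, by simp [Finset.mem_filter]; omega, rfl⟩

lemma kpq_eigenvector {n p q : ℕ} [DecidableRel (KpqPlusIsolated n p q).Adj]
    (hp : 1 ≤ p) (hq : 1 ≤ q) (hpq : p + q ≤ n) :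
    ∃ w : Fin n → ℝ, w ≠ 0 ∧
      (KpqPlusIsolated n p q).adjMatrix ℝ *ᵥ w = Real.sqrt (p * q) • w := by
  set w : Fin n → ℝ := fun y =>
    if y.val < p then Real.sqrt q else if y.val < p + q then Real.sqrt p else 0 with hw
  have hq0 : (0:ℝ) < Real.sqrt q := Real.sqrt_pos.mpr (by exact_mod_cast hq)
  have hp0 : (0:ℝ) < Real.sqrt p := Real.sqrt_pos.mpr (by exact_mod_cast hp)
  refine ⟨w, ?_, ?_⟩
  · intro h
    have := congrFun h ⟨0, by omega⟩
    simp only [hw, Pi.zero_apply] at this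
    rw [if_pos (by show 0 < p; omega)] at this
    exact hq0.ne' this
  · funext x
    have hsqrtmul : Real.sqrt (p*q : ℕ) = Real.sqrt p * Real.sqrt q := by
      push_cast
      exact Real.sqrt_mul (Nat.cast_nonneg p) q
    simp only [Matrix.mulVec, dotProduct]
    by_cases hx : x.val < p
    · have hterm : ∀ y, (KpqPlusIsolated n p q).adjMatrix ℝ x y * w y
          = if p ≤ y.val ∧ y.val < p + q then Real.sqrt p else 0 := by
        intro y
        by_cases hy : p ≤ y.val ∧ y.val < p + q
        · have hadj : (KpqPlusIsolated n p q).Adj x y := (kpq_adj hpq x y).mpr (Or.inl ⟨hx, hy.1, hy.2⟩)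
          have hwy : w y = Real.sqrt p := by
            simp only [hw]
            rw [if_neg (by omega), if_pos hy.2]
          simp [hadj, hwy, hy]
        · have hadj : ¬ (KpqPlusIsolated n p q).Adj x y := by
            rw [kpq_adj hpq x y]
            rintro (⟨_, h2, h3⟩ | ⟨_, h2, _⟩) <;> omega
          simp [hadj, hy]
      rw [Finset.sum_congr rfl fun y _ => hterm y, Finset.sum_ite, Finset.sum_const,
        Finset.sum_const_zero, add_zero, card_filter_Ico (by omega) (by omega)]
      have hwx : w x = Real.sqrt q := by simp only [hw]; rw [if_pos hx]
      simp only [Pi.smul_apply, smul_eq_mul, hwx, nsmul_eq_mul, hsqrtmul]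
      have hqq : Real.sqrt q ^ 2 = (q:ℝ) := Real.sq_sqrt (Nat.cast_nonneg q)
      rw [show (p + q - p : ℕ) = q by omega]
      rw [Real.sqrt_mul (Nat.cast_nonneg p)]
      linear_combination (-Real.sqrt p) * hqq
    · by_cases hx2 : x.val < p + q
      · have hterm : ∀ y, (KpqPlusIsolated n p q).adjMatrix ℝ x y * w y
            = if y.val < p then Real.sqrt q else 0 := by
          intro y
          by_cases hy : y.val < p
          · have hadj : (KpqPlusIsolated n p q).Adj x y := (kpq_adj hpq x y).mpr (Or.inr ⟨hy, by omega, hx2⟩)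
            have hwy : w y = Real.sqrt q := by simp only [hw]; rw [if_pos hy]
            simp [hadj, hwy, hy]
          · have hadj : ¬ (KpqPlusIsolated n p q).Adj x y := by
              rw [kpq_adj hpq x y]
              rintro (⟨h1, _, _⟩ | ⟨h1, _, _⟩) <;> omega
            simp [hadj, hy]
        rw [Finset.sum_congr rfl fun y _ => hterm y, Finset.sum_ite, Finset.sum_const,
          Finset.sum_const_zero, add_zero]
        have c0 : (Finset.univ.filter (fun y : Fin n => y.val < p)).card = p := by
          have h := card_filter_Ico (n := n) (a := 0) (b := p) (by omega) (by omega)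
          have he : (Finset.univ.filter (fun y : Fin n => 0 ≤ y.val ∧ y.val < p))
              = (Finset.univ.filter (fun y : Fin n => y.val < p)) := by
            ext y; simp
          rw [he] at h
          simpa using h
        rw [c0]
        have hwx : w x = Real.sqrt p := by
          simp only [hw]; rw [if_neg hx, if_pos hx2]
        simp only [Pi.smul_apply, smul_eq_mul, hwx, nsmul_eq_mul, hsqrtmul]
        have hpp : Real.sqrt p ^ 2 = (p:ℝ) := Real.sq_sqrt (Nat.cast_nonneg p)
        rw [Real.sqrt_mul (Nat.cast_nonneg p)]
        linear_combination (-Real.sqrt q) * hpp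
      · have hterm : ∀ y, (KpqPlusIsolated n p q).adjMatrix ℝ x y * w y = 0 := by
          intro y
          have hadj : ¬ (KpqPlusIsolated n p q).Adj x y := by
            rw [kpq_adj hpq x y]
            rintro (⟨h1, _, _⟩ | ⟨_, _, h3⟩) <;> omega
          simp [hadj]
        rw [Finset.sum_congr rfl fun y _ => hterm y, Finset.sum_const_zero]
        have hwx : w x = 0 := by
          simp only [hw]; rw [if_neg hx, if_neg hx2]
        simp [hwx]

theorem stmt13 {V : Type*} [Fintype V] (G : SimpleGraph V) (m : ℕ)
    (hbip : ∃ X : Set V, ∀ u v, G.Adj u v → (u ∈ X ↔ v ∉ X))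
    (hm : G.edgeSet.ncard = m) (hm1 : 1 ≤ m) :
    specRad G ≤ Real.sqrt m ∧
      (specRad G = Real.sqrt m ↔
        ∃ p q, p * q = m ∧ p + q ≤ Fintype.card V ∧
          Nonempty (G ≃g KpqPlusIsolated (Fintype.card V) p q)) := by
  classical
  have hmE : G.edgeFinset.card = m := by
    rw [← hm, ← Set.ncard_coe_finset, SimpleGraph.coe_edgeFinset]
  have hcore := spec_core G hbip hmE hm1
  rw [specRad_def G]
  refine ⟨hcore.1, ?_, ?_⟩
  · intro heq
    have hrank := hcore.2 heq
    have hne : G.edgeFinset.Nonempty := Finset.card_pos.mp (hmE ▸ hm1)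
    obtain ⟨e, he⟩ := hne
    have hadj : ∃ a b : V, G.Adj a b := by
      induction e using Sym2.ind with
      | _ a b => exact ⟨a, b, SimpleGraph.mem_edgeFinset.mp he⟩
    obtain ⟨u, v, huv⟩ := hadj
    have hstruct := structure_of_rank_le_two G hrank huv
    obtain ⟨p, q, hp1, hq1, hpqE, hpqn, hiso⟩ := build_iso G huv hstruct
    exact ⟨p, q, by rw [hpqE, hmE], hpqn, hiso⟩
  · rintro ⟨p, q, hpq, hpqn, ⟨φ⟩⟩
    have hp1 : 1 ≤ p := by
      rcases Nat.eq_zero_or_pos p with h | h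
      · rw [h] at hpq; simp at hpq; omega
      · exact h
    have hq1 : 1 ≤ q := by
      rcases Nat.eq_zero_or_pos q with h | h
      · rw [h] at hpq; simp at hpq; omega
      · exact h
    set n := Fintype.card V with hn
    have hKedge : (KpqPlusIsolated n p q).edgeFinset.card = m := by
      rw [← φ.card_edgeFinset_eq, hmE]
    have hKcore := spec_core (KpqPlusIsolated n p q) (kpq_bipartite n p q hpqn) hKedge hm1
    have hSeq : {t : ℝ | ∃ v : V → ℝ, v ≠ 0 ∧ G.adjMatrix ℝ *ᵥ v = t • v}
        = {t : ℝ | ∃ v : Fin n → ℝ, v ≠ 0 ∧ (KpqPlusIsolated n p q).adjMatrix ℝ *ᵥ v = t • v} := by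
      apply Set.Subset.antisymm
      · intro t ht
        exact eigSet_subset_of_iso φ.symm ht
      · intro t ht
        exact eigSet_subset_of_iso φ ht
    rw [hSeq]
    apply le_antisymm hKcore.1
    obtain ⟨wv, hw0, hwv⟩ := kpq_eigenvector hp1 hq1 hpqn
    have hmem : Real.sqrt (p * q) ∈
        {t : ℝ | ∃ v : Fin n → ℝ, v ≠ 0 ∧ (KpqPlusIsolated n p q).adjMatrix ℝ *ᵥ v = t • v} :=
      ⟨wv, hw0, hwv⟩
    have hbdd : BddAbove
        {t : ℝ | ∃ v : Fin n → ℝ, v ≠ 0 ∧ (KpqPlusIsolated n p q).adjMatrix ℝ *ᵥ v = t • v} := by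
      rw [eigSet_eq_range (adj_isHermitian _)]
      exact (Set.finite_range _).bddAbove
    have hle := le_csSup hbdd hmem
    have hcast : ((p : ℝ) * (q : ℝ)) = (m : ℝ) := by exact_mod_cast congrArg Nat.cast hpq
    rwa [hcast] at hle
end

section
/- A bipartite graph G = (A,B) contains an f-factor if and only if Σ_{x∈A} f(x) = Σ_{y∈B} f(y) and for every subset X ⊆ A, Σ_{x∈X} f(x) ≤ Σ_{y∈N(X)} min{f(y), d_X(y)}, where d_X(y) = |N(y) ∩ X|. -/
open SimpleGraph

set_option linter.unusedSectionVars false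
set_option maxHeartbeats 1000000

namespace FF
open Finset

variable {V : Type*} [Fintype V] [DecidableEq V]

def cop (f : V → ℕ) (v : V) : Finset (V × ℕ) := (Finset.range (f v)).image (fun i => (v, i))

lemma mem_cop {f : V → ℕ} {v : V} {c : V × ℕ} : c ∈ cop f v ↔ c.1 = v ∧ c.2 < f v := by
  constructor
  · rintro hc
    simp only [cop, mem_image, mem_range] at hc
    obtain ⟨i, hi, rfl⟩ := hc
    exact ⟨rfl, hi⟩
  · rintro ⟨h1, h2⟩
    simp only [cop, mem_image, mem_range]
    exact ⟨c.2, h2, by rw [← h1]⟩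

lemma card_cop (f : V → ℕ) (v : V) : (cop f v).card = f v := by
  rw [cop, card_image_of_injective _ (fun a b h => by simpa using h), card_range]

lemma card_biUnion_cop (f : V → ℕ) (S : Finset V) : (S.biUnion (cop f)).card = ∑ a ∈ S, f a := by
  rw [card_biUnion]
  · exact Finset.sum_congr rfl (fun a _ => card_cop f a)
  · intro a _ b _ hab
    simp only [Finset.disjoint_left]
    intro c hc hc'
    exact hab ((mem_cop.1 hc).1 ▸ (mem_cop.1 hc').1.symm ▸ rfl)

variable (G : SimpleGraph V) [DecidableRel G.Adj] (A : Finset V) (f : V → ℕ)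

def pairs : Finset (V × V) := Finset.univ.filter (fun p : V × V => p.1 ∈ A ∧ G.Adj p.1 p.2)

lemma mem_pairs {p : V × V} : p ∈ pairs G A ↔ p.1 ∈ A ∧ G.Adj p.1 p.2 := by
  simp [pairs]

abbrev T (V : Type*) := (V × ℕ) ⊕ (V × V)

def L : Finset (T V) := ((A.biUnion (cop f)).image Sum.inl) ∪ ((pairs G A).image Sum.inr)
def R : Finset (T V) := ((Aᶜ.biUnion (cop f)).image Sum.inl) ∪ ((pairs G A).image Sum.inr)

def nbr : T V → Finset (T V)
  | Sum.inl c => ((pairs G A).filter (fun p => p.1 = c.1)).image Sum.inr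
  | Sum.inr p => ((cop f p.2).image Sum.inl) ∪ {Sum.inr p}

lemma card_inl_inr_union (s : Finset (V × ℕ)) (t : Finset (V × V)) :
    (s.image (Sum.inl : _ → T V) ∪ t.image Sum.inr).card = s.card + t.card := by
  rw [card_union_of_disjoint, card_image_of_injective _ Sum.inl_injective,
    card_image_of_injective _ Sum.inr_injective]
  simp only [Finset.disjoint_left, mem_image]
  rintro x ⟨a, _, rfl⟩ ⟨b, _, h⟩
  exact Sum.inl_ne_inr h.symm

lemma card_L : (L G A f).card = (∑ a ∈ A, f a) + (pairs G A).card := by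
  rw [L, card_inl_inr_union, card_biUnion_cop]

lemma card_R : (R G A f).card = (∑ b ∈ Aᶜ, f b) + (pairs G A).card := by
  rw [R, card_inl_inr_union, card_biUnion_cop]

lemma hall_cond
    (hc : ∀ X ⊆ A, (∑ x ∈ X, f x) ≤
      ∑ y ∈ Finset.univ.filter (fun y => ∃ x ∈ X, G.Adj x y),
        min (f y) ((Finset.univ.filter (fun x => x ∈ X ∧ G.Adj x y)).card))
    (S : Finset (T V)) (hSL : S ⊆ L G A f) :
    S.card ≤ (S.biUnion (nbr G A f)).card := by
  classical
  set SA : Finset (V × ℕ) := (A.biUnion (cop f)).filter (fun c => Sum.inl c ∈ S) with hSA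
  set SF : Finset (V × V) := (pairs G A).filter (fun p => Sum.inr p ∈ S) with hSF
  set X : Finset V := A.filter (fun a => ∃ c ∈ SA, c.1 = a) with hX
  set NBX : Finset V := Finset.univ.filter (fun y => ∃ x ∈ X, G.Adj x y) with hNBX
  set EX : Finset (V × V) := (pairs G A).filter (fun p => p.1 ∈ X) with hEX
  set BF : Finset V := SF.image Prod.snd with hBF
  set Y : Finset V := NBX ∪ BF with hY
  -- decomposition of S
  have hSdec : S = SA.image Sum.inl ∪ SF.image Sum.inr := by
    ext x
    constructor
    · intro hx
      have := hSL hx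
      simp only [L, mem_union, mem_image] at this
      rcases this with ⟨c, hc', rfl⟩ | ⟨p, hp, rfl⟩
      · exact mem_union_left _ (mem_image_of_mem _ (mem_filter.2 ⟨hc', hx⟩))
      · exact mem_union_right _ (mem_image_of_mem _ (mem_filter.2 ⟨hp, hx⟩))
    · intro hx
      simp only [mem_union, mem_image] at hx
      rcases hx with ⟨c, hc', rfl⟩ | ⟨p, hp, rfl⟩
      · exact (mem_filter.1 hc').2
      · exact (mem_filter.1 hp).2
  have hcardS : S.card = SA.card + SF.card := by rw [hSdec, card_inl_inr_union]
  -- SA is within copies of X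
  have hSAX : SA ⊆ X.biUnion (cop f) := by
    intro c hcmem
    have h1 := mem_filter.1 hcmem
    obtain ⟨a, haA, hac⟩ := mem_biUnion.1 h1.1
    have hca : c.1 = a := (mem_cop.1 hac).1
    refine mem_biUnion.2 ⟨c.1, ?_, mem_cop.2 ⟨rfl, hca ▸ (mem_cop.1 hac).2⟩⟩
    exact mem_filter.2 ⟨hca ▸ haA, ⟨c, hcmem, rfl⟩⟩
  have hcardSA : SA.card ≤ ∑ a ∈ X, f a := by
    rw [← card_biUnion_cop]; exact card_le_card hSAX
  -- lower bound for the neighborhood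
  have hNsub : (BF.biUnion (cop f)).image Sum.inl ∪ (EX ∪ SF).image Sum.inr
      ⊆ S.biUnion (nbr G A f) := by
    intro q hq
    simp only [mem_union, mem_image] at hq
    rcases hq with ⟨c, hcmem, rfl⟩ | ⟨p, hp, rfl⟩
    · obtain ⟨b, hbBF, hcb⟩ := mem_biUnion.1 hcmem
      obtain ⟨p, hpSF, hpb⟩ := mem_image.1 hbBF
      refine mem_biUnion.2 ⟨Sum.inr p, (mem_filter.1 hpSF).2, ?_⟩
      simp only [nbr, mem_union, mem_image]
      exact Or.inl ⟨c, hpb ▸ hcb, rfl⟩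
    · rcases hp with hpEX | hpSF
      · have h1 := mem_filter.1 hpEX
        obtain ⟨-, c, hcSA, hc1⟩ := mem_filter.1 h1.2
        refine mem_biUnion.2 ⟨Sum.inl c, (mem_filter.1 hcSA).2, ?_⟩
        simp only [nbr, mem_image]
        exact ⟨p, mem_filter.2 ⟨h1.1, hc1.symm⟩, rfl⟩
      · refine mem_biUnion.2 ⟨Sum.inr p, (mem_filter.1 hpSF).2, ?_⟩
        simp [nbr]
  have hNcard : (EX ∪ SF).card + (∑ b ∈ BF, f b) ≤ (S.biUnion (nbr G A f)).card := by
    calc (EX ∪ SF).card + (∑ b ∈ BF, f b)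
        = ((BF.biUnion (cop f)).image Sum.inl ∪ (EX ∪ SF).image Sum.inr).card := by
          rw [card_inl_inr_union, card_biUnion_cop, Nat.add_comm]
      _ ≤ (S.biUnion (nbr G A f)).card := card_le_card hNsub
  -- fiberwise inequality
  have hfibU : ∀ p ∈ EX ∪ SF, p.2 ∈ Y := by
    intro p hp
    rcases mem_union.1 hp with h | h
    · have h1 := mem_filter.1 h
      exact mem_union_left _ (mem_filter.2 ⟨mem_univ _,
        ⟨p.1, h1.2, ((mem_pairs G A).1 h1.1).2⟩⟩)
    · exact mem_union_right _ (mem_image_of_mem _ h)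
  have hfibSF : ∀ p ∈ SF, p.2 ∈ Y := fun p hp => hfibU p (mem_union_right _ hp)
  have hkey : (∑ a ∈ X, f a) + SF.card ≤ (EX ∪ SF).card + ∑ b ∈ BF, f b := by
    have hXA : X ⊆ A := filter_subset _ _
    have h1 := hc X hXA
    rw [card_eq_sum_card_fiberwise hfibU, card_eq_sum_card_fiberwise hfibSF]
    have h2 : (∑ y ∈ NBX, min (f y) ((Finset.univ.filter (fun x => x ∈ X ∧ G.Adj x y)).card))
        = ∑ y ∈ Y, (if y ∈ NBX then min (f y) ((Finset.univ.filter (fun x => x ∈ X ∧ G.Adj x y)).card) else 0) := by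
      rw [sum_ite_mem, inter_eq_right.2 subset_union_left]
    have h3 : (∑ b ∈ BF, f b) = ∑ y ∈ Y, (if y ∈ BF then f y else 0) := by
      rw [sum_ite_mem, inter_eq_right.2 subset_union_right]
    calc (∑ a ∈ X, f a) + ∑ y ∈ Y, (SF.filter (fun p => p.2 = y)).card
        ≤ (∑ y ∈ Y, (if y ∈ NBX then min (f y) ((Finset.univ.filter (fun x => x ∈ X ∧ G.Adj x y)).card) else 0))
          + ∑ y ∈ Y, (SF.filter (fun p => p.2 = y)).card := by
          exact Nat.add_le_add_right (h2 ▸ h1) _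
      _ = ∑ y ∈ Y, ((if y ∈ NBX then min (f y) ((Finset.univ.filter (fun x => x ∈ X ∧ G.Adj x y)).card) else 0)
          + (SF.filter (fun p => p.2 = y)).card) := by rw [sum_add_distrib]
      _ ≤ ∑ y ∈ Y, (((EX ∪ SF).filter (fun p => p.2 = y)).card + (if y ∈ BF then f y else 0)) := by
          apply Finset.sum_le_sum
          intro y hy
          by_cases hyBF : y ∈ BF
          · simp only [hyBF, if_true]
            refine le_trans (Nat.add_le_add ?_ ?_) (Nat.le_of_eq (Nat.add_comm _ _))
            · split_ifs with h
              · exact min_le_left _ _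
              · exact Nat.zero_le _
            · exact card_le_card (filter_subset_filter _ subset_union_right)
          · have hSFempty : (SF.filter (fun p => p.2 = y)).card = 0 := by
              rw [card_eq_zero, filter_eq_empty_iff]
              intro p hp hpy
              exact hyBF (hpy ▸ mem_image_of_mem _ hp)
            rw [hSFempty, if_neg hyBF, Nat.add_zero, Nat.add_zero]
            split_ifs with hyNBX
            · calc min (f y) ((Finset.univ.filter (fun x => x ∈ X ∧ G.Adj x y)).card)
                  ≤ (Finset.univ.filter (fun x => x ∈ X ∧ G.Adj x y)).card := min_le_right _ _
                _ ≤ ((EX ∪ SF).filter (fun p => p.2 = y)).card := by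
                    apply card_le_card_of_injOn (fun x => (x, y))
                    · intro x hx
                      have h1 := mem_filter.1 hx
                      refine mem_filter.2 ⟨mem_union_left _ (mem_filter.2 ⟨?_, h1.2.1⟩), rfl⟩
                      exact (mem_pairs G A).2 ⟨hXA h1.2.1, h1.2.2⟩
                    · intro a _ b _ hab
                      exact (Prod.mk.injEq _ _ _ _ ▸ hab).1
            · exact Nat.zero_le _
      _ = (∑ y ∈ Y, ((EX ∪ SF).filter (fun p => p.2 = y)).card) + ∑ b ∈ BF, f b := by
          rw [sum_add_distrib, h3]
  calc S.card = SA.card + SF.card := hcardS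
    _ ≤ (∑ a ∈ X, f a) + SF.card := Nat.add_le_add_right hcardSA _
    _ ≤ (EX ∪ SF).card + ∑ b ∈ BF, f b := hkey
    _ ≤ (S.biUnion (nbr G A f)).card := hNcard


lemma core_exists
    (hbip : ∀ u v, G.Adj u v → (u ∈ A ↔ v ∉ A))
    (hsum : ∑ a ∈ A, f a = ∑ b ∈ Aᶜ, f b)
    (hc : ∀ X ⊆ A, (∑ x ∈ X, f x) ≤
      ∑ y ∈ Finset.univ.filter (fun y => ∃ x ∈ X, G.Adj x y),
        min (f y) ((Finset.univ.filter (fun x => x ∈ X ∧ G.Adj x y)).card)) :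
    ∃ H : SimpleGraph V, H ≤ G ∧ ∀ v, (H.neighborSet v).ncard = f v := by
  classical
  have hpL : ∀ p ∈ pairs G A, Sum.inr p ∈ L G A f := fun p hp =>
    mem_union_right _ (mem_image_of_mem _ hp)
  have hpR : ∀ p ∈ pairs G A, Sum.inr p ∈ R G A f := fun p hp =>
    mem_union_right _ (mem_image_of_mem _ hp)
  have hLc : ∀ a ∈ A, ∀ c ∈ cop f a, Sum.inl c ∈ L G A f := fun a ha c hcmem =>
    mem_union_left _ (mem_image_of_mem _ (mem_biUnion.2 ⟨a, ha, hcmem⟩))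
  have hRc : ∀ b ∉ A, ∀ c ∈ cop f b, Sum.inl c ∈ R G A f := fun b hb c hcmem =>
    mem_union_left _ (mem_image_of_mem _ (mem_biUnion.2 ⟨b, Finset.mem_compl.2 hb, hcmem⟩))
  have hsnd : ∀ p ∈ pairs G A, p.2 ∉ A := by
    intro p hp
    have h1 := (mem_pairs G A).1 hp
    exact (hbip p.1 p.2 h1.2).1 h1.1
  -- a member of L which is an inr comes from pairs
  have hinrL : ∀ p : V × V, Sum.inr p ∈ L G A f → p ∈ pairs G A := by
    intro p hx
    rcases mem_union.1 hx with h | h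
    · obtain ⟨c, -, hcontra⟩ := mem_image.1 h
      exact absurd hcontra (by simp)
    · obtain ⟨q, hq, hqe⟩ := mem_image.1 h
      rwa [← Sum.inr_injective hqe]
  have hinlL : ∀ c : V × ℕ, Sum.inl c ∈ L G A f → c ∈ A.biUnion (cop f) := by
    intro c hx
    rcases mem_union.1 hx with h | h
    · obtain ⟨c', hc', hce⟩ := mem_image.1 h
      rwa [← Sum.inl_injective hce]
    · obtain ⟨q, -, hce⟩ := mem_image.1 h
      exact absurd hce (by simp)
  have hnbrR : ∀ x ∈ L G A f, nbr G A f x ⊆ R G A f := by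
    intro x hx
    rcases x with c | p
    · intro q hq
      simp only [nbr, mem_image] at hq
      obtain ⟨p, hp, rfl⟩ := hq
      exact hpR p (mem_of_mem_filter _ hp)
    · have hp : p ∈ pairs G A := hinrL p hx
      intro q hq
      simp only [nbr, mem_union, mem_image, mem_singleton] at hq
      rcases hq with ⟨c, hcmem, rfl⟩ | rfl
      · exact hRc p.2 (hsnd p hp) c hcmem
      · exact hpR p hp
  -- Hall's theorem
  have hhall : ∀ s : Finset (↥(L G A f)),
      s.card ≤ (s.biUnion (fun x => nbr G A f x.1)).card := by
    intro s
    have h2 : (s.image Subtype.val).biUnion (nbr G A f) =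
        s.biUnion (fun x => nbr G A f x.1) := by
      ext q
      simp only [mem_biUnion, mem_image]
      constructor
      · rintro ⟨y, ⟨x, hx, rfl⟩, hq⟩
        exact ⟨x, hx, hq⟩
      · rintro ⟨x, hx, hq⟩
        exact ⟨x.1, ⟨x, hx, rfl⟩, hq⟩
    have h3 : s.image Subtype.val ⊆ L G A f := by
      intro x hx
      obtain ⟨y, -, rfl⟩ := mem_image.1 hx
      exact y.2
    have := hall_cond G A f hc (s.image Subtype.val) h3
    rwa [card_image_of_injective _ Subtype.val_injective, h2] at this
  obtain ⟨M, hMinj, hM⟩ :=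
    (Finset.all_card_le_biUnion_card_iff_exists_injective
      (fun x : ↥(L G A f) => nbr G A f x.1)).1 hhall
  have hMR : ∀ x : ↥(L G A f), M x ∈ R G A f := fun x => hnbrR x.1 x.2 (hM x)
  have himg : (Finset.univ : Finset (↥(L G A f))).image M = R G A f := by
    apply Finset.eq_of_subset_of_card_le
    · intro q hq
      obtain ⟨x, -, rfl⟩ := mem_image.1 hq
      exact hMR x
    · rw [card_image_of_injective _ hMinj, Finset.card_univ, Fintype.card_coe,
        card_L, card_R, hsum]
  have hsurj : ∀ q ∈ R G A f, ∃ x : ↥(L G A f), M x = q := by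
    intro q hq
    rw [← himg] at hq
    obtain ⟨x, -, hx⟩ := mem_image.1 hq
    exact ⟨x, hx⟩
  -- structure of preimages of `inr p`
  have hu1 : ∀ p ∈ pairs G A, ∀ x : ↥(L G A f), M x = Sum.inr p →
      (∃ c, x.1 = Sum.inl c ∧ c ∈ cop f p.1) ∨ x.1 = Sum.inr p := by
    intro p hp x hMx
    have hx := hM x
    rcases hxval : x.1 with c | q
    · left
      rw [hxval, hMx] at hx
      simp only [nbr, mem_image] at hx
      obtain ⟨p', hp', hpe⟩ := hx
      obtain rfl := Sum.inr_injective hpe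
      have hp1 : p'.1 = c.1 := (mem_filter.1 hp').2
      have hxL := x.2
      rw [hxval] at hxL
      obtain ⟨a, -, hca⟩ := mem_biUnion.1 (hinlL c hxL)
      have hcc := mem_cop.1 hca
      exact ⟨c, rfl, mem_cop.2 ⟨hp1.symm, by rw [hp1, hcc.1]; exact hcc.2⟩⟩
    · right
      rw [hxval, hMx] at hx
      simp only [nbr, mem_union, mem_image, mem_singleton] at hx
      rcases hx with ⟨c, -, hcontra⟩ | h
      · exact absurd hcontra (by simp)
      · exact h.symm
  -- the used edges
  set used : Finset (V × V) := (pairs G A).filter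
    (fun p => ∃ x : ↥(L G A f), M x = Sum.inr p ∧ x.1 ≠ Sum.inr p) with hused
  have husedpairs : used ⊆ pairs G A := filter_subset _ _
  have hused_iff : ∀ p, (hp : p ∈ pairs G A) →
      (p ∈ used ↔ M ⟨Sum.inr p, hpL p hp⟩ ≠ Sum.inr p) := by
    intro p hp
    constructor
    · rintro hpu hcontra
      obtain ⟨-, x, hMx, hxne⟩ := mem_filter.1 hpu
      have : x = ⟨Sum.inr p, hpL p hp⟩ := hMinj (hMx.trans hcontra.symm)
      exact hxne (by rw [this])
    · intro hne
      obtain ⟨x, hMx⟩ := hsurj (Sum.inr p) (hpR p hp)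
      refine mem_filter.2 ⟨hp, x, hMx, ?_⟩
      intro hxval
      have : x = ⟨Sum.inr p, hpL p hp⟩ := Subtype.ext hxval
      exact hne (this ▸ hMx)
  have hused_cop : ∀ p, (hp : p ∈ pairs G A) → p ∈ used →
      M ⟨Sum.inr p, hpL p hp⟩ ∈ (cop f p.2).image Sum.inl := by
    intro p hp hpu
    have hx := hM ⟨Sum.inr p, hpL p hp⟩
    simp only [nbr, mem_union, mem_singleton] at hx
    rcases hx with h | h
    · exact h
    · exact absurd h ((hused_iff p hp).1 hpu)
  -- degree count on the A side
  have hdegA : ∀ a ∈ A, (used.filter (fun p => p.1 = a)).card = f a := by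
    intro a ha
    have hcards1 : ((cop f a).attach.image
        (fun c => M ⟨Sum.inl c.1, hLc a ha c.1 c.2⟩)).card = f a := by
      rw [card_image_of_injective, card_attach, card_cop]
      intro c c' hcc
      exact Subtype.ext (Sum.inl_injective (congrArg Subtype.val (hMinj hcc)))
    have hs1sub : (cop f a).attach.image (fun c => M ⟨Sum.inl c.1, hLc a ha c.1 c.2⟩)
        = (used.filter (fun p => p.1 = a)).image Sum.inr := by
      apply Finset.Subset.antisymm
      · intro q hq
        obtain ⟨c, -, rfl⟩ := mem_image.1 hq
        have hx := hM ⟨Sum.inl c.1, hLc a ha c.1 c.2⟩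
        simp only [nbr, mem_image] at hx
        obtain ⟨p, hpf, hpe⟩ := hx
        have hp : p ∈ pairs G A := mem_of_mem_filter _ hpf
        have hp1 : p.1 = c.1.1 := (mem_filter.1 hpf).2
        have hc1a : c.1.1 = a := (mem_cop.1 c.2).1
        have hpu : p ∈ used :=
          mem_filter.2 ⟨hp, ⟨Sum.inl c.1, hLc a ha c.1 c.2⟩, hpe.symm, by simp⟩
        rw [← hpe]
        exact mem_image_of_mem _ (mem_filter.2 ⟨hpu, hp1.trans hc1a⟩)
      · intro q hq
        obtain ⟨p, hpf, rfl⟩ := mem_image.1 hq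
        obtain ⟨hpu, hp1⟩ := mem_filter.1 hpf
        have hp : p ∈ pairs G A := husedpairs hpu
        obtain ⟨-, x, hMx, hxne⟩ := mem_filter.1 hpu
        rcases hu1 p hp x hMx with ⟨c, hxval, hccop⟩ | hxval
        · have hccop' : c ∈ cop f a := by rwa [hp1] at hccop
          refine mem_image.2 ⟨⟨c, hccop'⟩, mem_attach _ _, ?_⟩
          have hxeq : (⟨Sum.inl c, hLc a ha c hccop'⟩ : ↥(L G A f)) = x :=
            Subtype.ext hxval.symm
          rw [hxeq, hMx]
        · exact absurd hxval hxne
    rw [hs1sub, card_image_of_injective _ Sum.inr_injective] at hcards1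
    exact hcards1
  -- degree count on the B side
  have hdegB : ∀ b, b ∉ A → (used.filter (fun p => p.2 = b)).card = f b := by
    intro b hb
    have hUbp : ∀ p ∈ used.filter (fun p => p.2 = b), p ∈ pairs G A :=
      fun p hp => husedpairs (mem_of_mem_filter _ hp)
    have hcards2 : ((used.filter (fun p => p.2 = b)).attach.image
        (fun p => M ⟨Sum.inr p.1, hpL p.1 (hUbp p.1 p.2)⟩)).card
        = (used.filter (fun p => p.2 = b)).card := by
      rw [card_image_of_injective, card_attach]
      intro p p' hpp
      exact Subtype.ext (Sum.inr_injective (congrArg Subtype.val (hMinj hpp)))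
    have hs2eq : (used.filter (fun p => p.2 = b)).attach.image
        (fun p => M ⟨Sum.inr p.1, hpL p.1 (hUbp p.1 p.2)⟩) = (cop f b).image Sum.inl := by
      apply Finset.Subset.antisymm
      · intro q hq
        obtain ⟨p, -, rfl⟩ := mem_image.1 hq
        have hpu : p.1 ∈ used := mem_of_mem_filter _ p.2
        have h2 := hused_cop p.1 (hUbp p.1 p.2) hpu
        have hb2 : p.1.2 = b := (mem_filter.1 p.2).2
        rwa [hb2] at h2
      · intro q hq
        obtain ⟨c, hcmem, rfl⟩ := mem_image.1 hq
        obtain ⟨x, hMx⟩ := hsurj (Sum.inl c) (hRc b hb c hcmem)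
        rcases hxval : x.1 with c' | p
        · exfalso
          have hx := hM x
          rw [hxval, hMx] at hx
          simp only [nbr, mem_image] at hx
          obtain ⟨p', -, hpe⟩ := hx
          exact absurd hpe (by simp)
        · have hpp : p ∈ pairs G A := hinrL p (hxval ▸ x.2)
          have hx := hM x
          rw [hxval, hMx] at hx
          simp only [nbr, mem_union, mem_image, mem_singleton] at hx
          rcases hx with ⟨c', hc', hce⟩ | h
          · have hcc : c' = c := Sum.inl_injective hce
            have hp2 : c.1 = p.2 := (mem_cop.1 (hcc ▸ hc')).1
            have hcb : c.1 = b := (mem_cop.1 hcmem).1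
            have hpb : p.2 = b := hp2 ▸ hcb
            have hxeq : x = ⟨Sum.inr p, hpL p hpp⟩ := Subtype.ext hxval
            have hpu : p ∈ used := (hused_iff p hpp).2 (by rw [← hxeq, hMx]; simp)
            have hpUb : p ∈ used.filter (fun p => p.2 = b) := mem_filter.2 ⟨hpu, hpb⟩
            refine mem_image.2 ⟨⟨p, hpUb⟩, mem_attach _ _, ?_⟩
            have hxeq2 : (⟨Sum.inr p, hpL p (hUbp p hpUb)⟩ : ↥(L G A f)) = x :=
              Subtype.ext hxval.symm
            rw [hxeq2, hMx]
          · exact absurd h (by simp)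
    rw [hs2eq, card_image_of_injective _ Sum.inl_injective, card_cop] at hcards2
    exact hcards2.symm
  -- construct the graph
  let Hgr : SimpleGraph V :=
    { Adj := fun u v => (u,v) ∈ used ∨ (v,u) ∈ used
      symm := ⟨fun u v h => Or.symm h⟩
      loopless := ⟨fun v h => by
        rcases h with h | h <;>
          exact G.loopless.irrefl v ((mem_pairs G A).1 (husedpairs h)).2⟩ }
  have hAdj : ∀ u v, Hgr.Adj u v ↔ ((u,v) ∈ used ∨ (v,u) ∈ used) := fun _ _ => Iff.rfl
  refine ⟨Hgr, ?_, ?_⟩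
  · intro u v h
    rcases (hAdj u v).1 h with h | h
    · exact ((mem_pairs G A).1 (husedpairs h)).2
    · exact (((mem_pairs G A).1 (husedpairs h)).2).symm
  · intro v
    have hnbr_eq : Hgr.neighborSet v
        = ↑(Finset.univ.filter (fun w => (v,w) ∈ used ∨ (w,v) ∈ used)) := by
      ext w
      simp only [Finset.coe_filter, mem_univ, true_and, Set.mem_setOf_eq,
        SimpleGraph.mem_neighborSet]
      exact hAdj v w
    rw [hnbr_eq, Set.ncard_coe_finset]
    by_cases hv : v ∈ A
    · have hfe : Finset.univ.filter (fun w => (v,w) ∈ used ∨ (w,v) ∈ used)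
          = Finset.univ.filter (fun w => (v,w) ∈ used) := by
        apply filter_congr
        intro w _
        constructor
        · rintro (h | h)
          · exact h
          · have h2 := (mem_pairs G A).1 (husedpairs h)
            exact absurd hv ((hbip w v h2.2).1 h2.1)
        · exact Or.inl
      rw [hfe, ← hdegA v hv]
      apply card_bij (fun w _ => (v, w))
      · intro w hw
        exact mem_filter.2 ⟨(mem_filter.1 hw).2, rfl⟩
      · intro w _ w' _ h
        exact (Prod.mk.injEq _ _ _ _ ▸ h).2
      · intro p hp
        obtain ⟨hpu, hp1⟩ := mem_filter.1 hp
        exact ⟨p.2, mem_filter.2 ⟨mem_univ _, by rw [← hp1]; exact hpu⟩, by rw [← hp1]⟩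
    · have hfe : Finset.univ.filter (fun w => (v,w) ∈ used ∨ (w,v) ∈ used)
          = Finset.univ.filter (fun w => (w,v) ∈ used) := by
        apply filter_congr
        intro w _
        constructor
        · rintro (h | h)
          · have h2 := (mem_pairs G A).1 (husedpairs h)
            exact absurd h2.1 hv
          · exact h
        · exact Or.inr
      rw [hfe, ← hdegB v hv]
      apply card_bij (fun w _ => (w, v))
      · intro w hw
        exact mem_filter.2 ⟨(mem_filter.1 hw).2, rfl⟩
      · intro w _ w' _ h
        exact (Prod.mk.injEq _ _ _ _ ▸ h).1
      · intro p hp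
        obtain ⟨hpu, hp2⟩ := mem_filter.1 hp
        exact ⟨p.1, mem_filter.2 ⟨mem_univ _, by rw [← hp2]; exact hpu⟩, by rw [← hp2]⟩


lemma core_forward
    (hbip : ∀ u v, G.Adj u v → (u ∈ A ↔ v ∉ A))
    (H : SimpleGraph V) (hHG : H ≤ G) (hdeg : ∀ v, (H.neighborSet v).ncard = f v) :
    (∑ a ∈ A, f a = ∑ b ∈ Aᶜ, f b) ∧
    ∀ X ⊆ A, (∑ x ∈ X, f x) ≤
      ∑ y ∈ Finset.univ.filter (fun y => ∃ x ∈ X, G.Adj x y),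
        min (f y) ((Finset.univ.filter (fun x => x ∈ X ∧ G.Adj x y)).card) := by
  classical
  have hdeg' : ∀ v, (Finset.univ.filter (fun w => H.Adj v w)).card = f v := by
    intro v
    have h1 : H.neighborSet v = ↑(Finset.univ.filter (fun w => H.Adj v w)) := by
      ext w
      simp [SimpleGraph.neighborSet]
    rw [← hdeg v, h1, Set.ncard_coe_finset]
  -- fiber over a first coordinate in a vertex set S
  have hfib : ∀ (S : Finset V), ∀ a ∈ S,
      ((Finset.univ.filter (fun p : V × V => p.1 ∈ S ∧ H.Adj p.1 p.2)).filter
        (fun p => p.1 = a)).card = f a := by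
    intro S a ha
    rw [← hdeg' a]
    apply card_bij (fun (p : V × V) _ => p.2)
    · intro p hp
      have h1 := (mem_filter.1 (mem_of_mem_filter _ hp)).2
      exact mem_filter.2 ⟨mem_univ _, (mem_filter.1 hp).2 ▸ h1.2⟩
    · intro p hp p' hp' hpp
      have h1 : p.1 = a := (mem_filter.1 hp).2
      have h2 : p'.1 = a := (mem_filter.1 hp').2
      exact Prod.ext (h1.trans h2.symm) hpp
    · intro w hw
      refine ⟨(a, w), ?_, rfl⟩
      refine mem_filter.2 ⟨mem_filter.2 ⟨mem_univ _, ha, (mem_filter.1 hw).2⟩, rfl⟩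
  have hcount : ∀ (S : Finset V),
      (Finset.univ.filter (fun p : V × V => p.1 ∈ S ∧ H.Adj p.1 p.2)).card
        = ∑ a ∈ S, f a := by
    intro S
    rw [card_eq_sum_card_fiberwise (f := Prod.fst) (t := S)
      (fun p hp => (mem_filter.1 hp).2.1)]
    exact Finset.sum_congr rfl (fun a ha => hfib S a ha)
  constructor
  · -- sum over A equals sum over complement
    rw [← hcount A]
    have hsnd : ∀ p ∈ Finset.univ.filter (fun p : V × V => p.1 ∈ A ∧ H.Adj p.1 p.2),
        p.2 ∈ Aᶜ := by
      intro p hp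
      have h1 := (mem_filter.1 hp).2
      exact Finset.mem_compl.2 ((hbip p.1 p.2 (hHG h1.2)).1 h1.1)
    rw [card_eq_sum_card_fiberwise hsnd]
    apply Finset.sum_congr rfl
    intro b hb
    have hbA : b ∉ A := Finset.mem_compl.1 hb
    rw [← hdeg' b]
    apply card_bij (fun (p : V × V) _ => p.1)
    · intro p hp
      have h1 := (mem_filter.1 (mem_of_mem_filter _ hp)).2
      have h2 : p.2 = b := (mem_filter.1 hp).2
      exact mem_filter.2 ⟨mem_univ _, h2 ▸ h1.2.symm⟩
    · intro p hp p' hp' hpp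
      have h1 : p.2 = b := (mem_filter.1 hp).2
      have h2 : p'.2 = b := (mem_filter.1 hp').2
      exact Prod.ext hpp (h1.trans h2.symm)
    · intro w hw
      have hadj : H.Adj b w := (mem_filter.1 hw).2
      have hwA : w ∈ A := (hbip w b (hHG hadj.symm)).2 hbA
      exact ⟨(w, b), mem_filter.2 ⟨mem_filter.2 ⟨mem_univ _, hwA, hadj.symm⟩, rfl⟩, rfl⟩
  · -- the degree condition
    intro X hXA
    rw [← hcount X]
    have hsnd : ∀ p ∈ Finset.univ.filter (fun p : V × V => p.1 ∈ X ∧ H.Adj p.1 p.2),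
        p.2 ∈ Finset.univ.filter (fun y => ∃ x ∈ X, G.Adj x y) := by
      intro p hp
      have h1 := (mem_filter.1 hp).2
      exact mem_filter.2 ⟨mem_univ _, p.1, h1.1, hHG h1.2⟩
    rw [card_eq_sum_card_fiberwise hsnd]
    apply Finset.sum_le_sum
    intro y hy
    apply le_min
    · rw [← hdeg' y]
      apply card_le_card_of_injOn (fun p => p.1)
      · intro p hp
        have h1 := (mem_filter.1 (mem_of_mem_filter _ hp)).2
        have h2 : p.2 = y := (mem_filter.1 hp).2
        exact mem_filter.2 ⟨mem_univ _, h2 ▸ h1.2.symm⟩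
      · intro p hp p' hp' hpp
        have h1 : p.2 = y := (mem_filter.1 hp).2
        have h2 : p'.2 = y := (mem_filter.1 hp').2
        exact Prod.ext hpp (h1.trans h2.symm)
    · apply card_le_card_of_injOn (fun p => p.1)
      · intro p hp
        have h1 := (mem_filter.1 (mem_of_mem_filter _ hp)).2
        have h2 : p.2 = y := (mem_filter.1 hp).2
        exact mem_filter.2 ⟨mem_univ _, h1.1, h2 ▸ hHG h1.2⟩
      · intro p hp p' hp' hpp
        have h1 : p.2 = y := (mem_filter.1 hp).2
        have h2 : p'.2 = y := (mem_filter.1 hp').2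
        exact Prod.ext hpp (h1.trans h2.symm)


end FF

open Finset in
theorem stmt19 {V : Type*} [Fintype V] (G : SimpleGraph V) (A : Set V)
    (hbip : ∀ u v, G.Adj u v → (u ∈ A ↔ v ∉ A)) (f : V → ℕ) :
    (∃ H : SimpleGraph V, H ≤ G ∧ ∀ v, (H.neighborSet v).ncard = f v) ↔
      ((∑ᶠ x ∈ A, f x) = (∑ᶠ y ∈ Aᶜ, f y) ∧
        ∀ X : Set V, X ⊆ A →
          (∑ᶠ x ∈ X, f x) ≤
            ∑ᶠ y ∈ {y | ∃ x ∈ X, G.Adj x y},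
              min (f y) ((G.neighborSet y ∩ X).ncard)) := by
  classical
  haveI : DecidableEq V := Classical.decEq V
  haveI : DecidableRel G.Adj := fun a b => Classical.dec _
  set Af : Finset V := (Set.toFinite A).toFinset with hAf
  have hmemA : ∀ v, v ∈ Af ↔ v ∈ A := fun v => Set.Finite.mem_toFinset _
  have hcoeA : (↑Af : Set V) = A := Set.Finite.coe_toFinset _
  have hbip' : ∀ u v, G.Adj u v → (u ∈ Af ↔ v ∉ Af) := by
    intro u v h
    rw [hmemA, hmemA]
    exact hbip u v h
  have hsum1 : ∑ᶠ x ∈ A, f x = ∑ x ∈ Af, f x := by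
    rw [← hcoeA, finsum_mem_coe_finset]
  have hsum2 : ∑ᶠ y ∈ Aᶜ, f y = ∑ y ∈ Afᶜ, f y := by
    have h : (↑(Afᶜ) : Set V) = Aᶜ := by rw [Finset.coe_compl, hcoeA]
    rw [← h, finsum_mem_coe_finset]
  have hRHS : ∀ Xf : Finset V,
      (∑ᶠ y ∈ {y | ∃ x ∈ (↑Xf : Set V), G.Adj x y},
        min (f y) ((G.neighborSet y ∩ ↑Xf).ncard))
      = ∑ y ∈ Finset.univ.filter (fun y => ∃ x ∈ Xf, G.Adj x y),
          min (f y) ((Finset.univ.filter (fun x => x ∈ Xf ∧ G.Adj x y)).card) := by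
    intro Xf
    have hset : {y | ∃ x ∈ (↑Xf : Set V), G.Adj x y}
        = ↑(Finset.univ.filter (fun y => ∃ x ∈ Xf, G.Adj x y)) := by
      ext y
      simp
    rw [hset, finsum_mem_coe_finset]
    apply Finset.sum_congr rfl
    intro y _
    congr 1
    have h2 : G.neighborSet y ∩ ↑Xf
        = ↑(Finset.univ.filter (fun x => x ∈ Xf ∧ G.Adj x y)) := by
      ext x
      simp only [Set.mem_inter_iff, SimpleGraph.mem_neighborSet, Finset.coe_filter,
        Set.mem_setOf_eq, Finset.mem_coe, Finset.mem_univ, true_and]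
      constructor
      · rintro ⟨h1, h2⟩
        exact ⟨h2, h1.symm⟩
      · rintro ⟨h1, h2⟩
        exact ⟨h2.symm, h1⟩
    rw [h2, Set.ncard_coe_finset]
  constructor
  · rintro ⟨H, hHG, hdeg⟩
    obtain ⟨h1, h2⟩ := FF.core_forward G Af f hbip' H hHG hdeg
    constructor
    · rw [hsum1, hsum2]
      exact h1
    · intro X hXA
      have hXfin : X.Finite := Set.toFinite X
      have hcoeX : (↑(hXfin.toFinset) : Set V) = X := Set.Finite.coe_toFinset _
      have hXsub : hXfin.toFinset ⊆ Af := by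
        intro x hx
        rw [hmemA]
        exact hXA (by rwa [Set.Finite.mem_toFinset] at hx)
      have h3 := h2 hXfin.toFinset hXsub
      rw [← hcoeX, finsum_mem_coe_finset, hRHS hXfin.toFinset]
      exact h3
  · rintro ⟨h1, h2⟩
    apply FF.core_exists G Af f hbip'
    · rw [← hsum1, ← hsum2]
      exact h1
    · intro Xf hXsub
      have hXA : (↑Xf : Set V) ⊆ A := by
        rw [← hcoeA]
        exact Finset.coe_subset.2 hXsub
      have h3 := h2 ↑Xf hXA
      rw [finsum_mem_coe_finset, hRHS Xf] at h3
      exact h3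
end
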